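/- arXiv:1909.07119 — 4 statements merged into one kernel-verified Lean document; each statement's English description precedes it below -/
import Mathlib

section
/- Let γ : [a,b] → ℝ² be a continuous curve of finite turn and suppose that the image Im(γ) = γ([a,b]) is a Lipschitz graph. Then Im(γ) is a DC graph. -/
open Set
open scoped RealInnerProductSpace

/-- `M` is an `L`-Lipschitz graph in the direction of a unit vector `v`. -/
def IsLipschitzGraphInDir (L : ℝ) (v : EuclideanSpace ℝ (Fin 2))
    (M : Set (EuclideanSpace ℝ (Fin 2))) : Prop :=
  ∃ (K : Set (EuclideanSpace ℝ (Fin 2))) (f : EuclideanSpace ℝ (Fin 2) → ℝ),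
    IsClosed K ∧ Convex ℝ K ∧ (∀ t ∈ K, ⟪t, v⟫ = 0) ∧
    (∀ s ∈ K, ∀ t ∈ K, |f s - f t| ≤ L * ‖s - t‖) ∧
    M = (fun t => t + f t • v) '' K

/-- `M ⊆ ℝ²` is a DC graph: for some unit vector `v` and unit vector `w` spanning `v^⊥`,
there are a closed convex set `K ⊆ ℝ` (identifying `v^⊥` with `ℝ` via `w`) and a DC function
(a difference of two convex functions on an open interval containing `K`) whose graph over
`K` is `M`. -/
def IsDCGraph (M : Set (EuclideanSpace ℝ (Fin 2))) : Prop :=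
  ∃ v w : EuclideanSpace ℝ (Fin 2), ‖v‖ = 1 ∧ ‖w‖ = 1 ∧ ⟪v, w⟫ = 0 ∧
    ∃ K O : Set ℝ, IsClosed K ∧ Convex ℝ K ∧ IsOpen O ∧ Convex ℝ O ∧ K ⊆ O ∧
      ∃ g h : ℝ → ℝ, ConvexOn ℝ O g ∧ ConvexOn ℝ O h ∧
        M = (fun t => t • w + (g t - h t) • v) '' K

/-- The curve `γ : [a,b] → ℝ²` has finite turn: the sums of angles between consecutive
chords are bounded over all partitions of `[a,b]` for which these angles make sense. -/
def HasFiniteTurn (γ : ℝ → EuclideanSpace ℝ (Fin 2)) (a b : ℝ) : Prop :=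
  ∃ C : ℝ, ∀ (n : ℕ) (x : ℕ → ℝ), x 0 = a → x n = b →
    (∀ k < n, x k < x (k + 1)) → (∀ k < n, γ (x (k + 1)) ≠ γ (x k)) →
    ∑ k ∈ Finset.range (n - 1),
      InnerProductGeometry.angle
        (‖γ (x (k + 1)) - γ (x k)‖⁻¹ • (γ (x (k + 1)) - γ (x k)))
        (‖γ (x (k + 2)) - γ (x (k + 1))‖⁻¹ • (γ (x (k + 2)) - γ (x (k + 1)))) < C


noncomputable section
open Real

lemma card_le_of_gap (B : Finset ℕ) (bound : ℕ)
    (h : ∀ i ∈ B, ∀ j ∈ B, i ≤ j → j ≤ i + bound) : B.card ≤ bound + 1 := by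
  rcases B.eq_empty_or_nonempty with rfl | hne
  · simp
  · have hsub : B ⊆ Finset.Icc (B.min' hne) (B.min' hne + bound) := by
      intro j hj
      rw [Finset.mem_Icc]
      exact ⟨B.min'_le j hj, h _ (B.min'_mem hne) j hj (B.min'_le j hj)⟩
    calc B.card ≤ (Finset.Icc (B.min' hne) (B.min' hne + bound)).card := Finset.card_le_card hsub
      _ = bound + 1 := by rw [Nat.card_Icc]; omega


/-- slope of `G` over `[u,v]`. -/
def slopeF (G : ℝ → ℝ) (u v : ℝ) : ℝ := (G v - G u) / (v - u)

/-- downward slope-variation sum of a chain `s 0 < s 1 < ... < s k`. -/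
def DS (G : ℝ → ℝ) (k : ℕ) (s : ℕ → ℝ) : ℝ :=
  ∑ i ∈ Finset.range (k - 1),
    max (slopeF G (s i) (s (i + 1)) - slopeF G (s (i + 1)) (s (i + 2))) 0

def DSet (G : ℝ → ℝ) (c' d' x : ℝ) : Set ℝ :=
  {D | ∃ k s, (∀ i < k, s i < s (i + 1)) ∧ (∀ i ≤ k, s i ∈ Icc c' (min x d')) ∧ D = DS G k s}

def nvar (G : ℝ → ℝ) (c' d' x : ℝ) : ℝ := sSup (DSet G c' d' x)

lemma DS_nonneg (G : ℝ → ℝ) (k : ℕ) (s : ℕ → ℝ) : 0 ≤ DS G k s :=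
  Finset.sum_nonneg fun _ _ => le_max_right _ _

lemma zero_mem_DSet {G : ℝ → ℝ} {c' d' x : ℝ} (h : c' ≤ min x d') : (0:ℝ) ∈ DSet G c' d' x := by
  refine ⟨0, fun _ => c', by omega, ?_, by simp [DS]⟩
  intro i _
  exact ⟨le_refl _, h⟩

lemma DSet_mono {G : ℝ → ℝ} {c' d' x y : ℝ} (h : x ≤ y) : DSet G c' d' x ⊆ DSet G c' d' y := by
  rintro D ⟨k, s, h1, h2, h3⟩
  exact ⟨k, s, h1, fun i hi => ⟨(h2 i hi).1, le_trans (h2 i hi).2 (min_le_min h le_rfl)⟩, h3⟩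

section Bound

variable {G : ℝ → ℝ} {c' d' CA : ℝ}
variable (hCA : ∀ (k : ℕ) (s : ℕ → ℝ), (∀ i < k, s i < s (i + 1)) →
    (∀ i ≤ k, s i ∈ Icc c' d') → DS G k s ≤ CA)

include hCA

lemma DSet_bddAbove (x : ℝ) : BddAbove (DSet G c' d' x) := by
  refine ⟨CA, ?_⟩
  rintro D ⟨k, s, h1, h2, rfl⟩
  exact hCA k s h1 fun i hi => ⟨(h2 i hi).1, le_trans (h2 i hi).2 (min_le_right _ _)⟩

lemma nvar_nonneg (x : ℝ) : 0 ≤ nvar G c' d' x := by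
  rcases le_or_gt c' (min x d') with h | h
  · exact le_csSup (DSet_bddAbove hCA x) (zero_mem_DSet h)
  · have : DSet G c' d' x = ∅ := by
      ext D
      simp only [DSet, mem_setOf_eq, mem_empty_iff_false, iff_false, not_exists]
      rintro k s ⟨h1, h2, h3⟩
      have := h2 0 (Nat.zero_le _)
      have := this.1.trans this.2
      linarith
    simp [nvar, this, Real.sSup_empty]

lemma nvar_mono : Monotone (nvar G c' d') := by
  intro x y hxy
  rcases le_or_gt c' (min x d') with h | h
  · exact csSup_le_csSup (DSet_bddAbove hCA y) ⟨0, zero_mem_DSet h⟩ (DSet_mono hxy)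
  · have : DSet G c' d' x = ∅ := by
      ext D
      simp only [DSet, mem_setOf_eq, mem_empty_iff_false, iff_false, not_exists]
      rintro k s ⟨h1, h2, h3⟩
      have := h2 0 (Nat.zero_le _)
      have := this.1.trans this.2
      linarith
    rw [nvar, this, Real.sSup_empty]
    exact nvar_nonneg hCA y

lemma nvar_le (x : ℝ) (hcd : c' ≤ d') : nvar G c' d' x ≤ max CA 0 := by
  rcases (DSet G c' d' x).eq_empty_or_nonempty with h | h
  · rw [nvar, h, Real.sSup_empty]; exact le_max_right _ _
  · refine csSup_le h ?_
    rintro D ⟨k, s, h1, h2, rfl⟩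
    exact le_trans (hCA k s h1 fun i hi => ⟨(h2 i hi).1, le_trans (h2 i hi).2 (min_le_right _ _)⟩)
      (le_max_left _ _)


end Bound
end

noncomputable section
/-- append a point to a chain -/
def snoc (k : ℕ) (s : ℕ → ℝ) (p : ℝ) : ℕ → ℝ := fun i => if i ≤ k then s i else p

lemma snoc_lt {k : ℕ} {s : ℕ → ℝ} {p : ℝ} (hmono : ∀ i < k, s i < s (i + 1))
    (hp : s k < p) : ∀ i < k + 1, snoc k s p i < snoc k s p (i + 1) := by
  intro i hi
  rcases lt_or_ge i k with h | h
  · have h1 : i ≤ k := le_of_lt h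
    have h2 : i + 1 ≤ k := h
    simp only [snoc, if_pos h1, if_pos h2]
    exact hmono i h
  · have hik : i = k := by omega
    subst hik
    simp only [snoc, if_pos (le_refl i), if_neg (by omega : ¬ i + 1 ≤ i)]
    exact hp

lemma snoc_mem {k : ℕ} {s : ℕ → ℝ} {p : ℝ} {A : Set ℝ} (hmem : ∀ i ≤ k, s i ∈ A)
    (hp : p ∈ A) : ∀ i ≤ k + 1, snoc k s p i ∈ A := by
  intro i hi
  rcases le_or_gt i k with h | h
  · simp only [snoc, if_pos h]; exact hmem i h
  · simp only [snoc, if_neg (not_le.2 h)]; exact hp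

lemma DS_snoc_zero (G : ℝ → ℝ) (s : ℕ → ℝ) (p : ℝ) : DS G 1 (snoc 0 s p) = 0 := by
  simp [DS]

lemma DS_snoc (G : ℝ → ℝ) {k : ℕ} (hk : 1 ≤ k) (s : ℕ → ℝ) (p : ℝ) :
    DS G (k + 1) (snoc k s p) =
      DS G k s + max (slopeF G (s (k-1)) (s k) - slopeF G (s k) p) 0 := by
  have hkk : k + 1 - 1 = (k - 1) + 1 := by omega
  rw [DS, hkk, Finset.sum_range_succ]
  congr 1
  · rw [DS]
    apply Finset.sum_congr rfl
    intro i hi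
    simp only [Finset.mem_range] at hi
    have h1 : i ≤ k := by omega
    have h2 : i + 1 ≤ k := by omega
    have h3 : i + 2 ≤ k := by omega
    simp only [snoc, if_pos h1, if_pos h2, if_pos h3]
  · have h1 : k - 1 ≤ k := by omega
    have h2 : k - 1 + 1 = k := by omega
    have h3 : ¬ (k - 1 + 2 ≤ k) := by omega
    simp only [snoc, if_pos h1, h2, if_pos (le_refl k), if_neg h3]

lemma DS_snoc_ge (G : ℝ → ℝ) (k : ℕ) (s : ℕ → ℝ) (p : ℝ) :
    DS G k s ≤ DS G (k + 1) (snoc k s p) := by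
  rcases Nat.eq_zero_or_pos k with rfl | hk
  · rw [DS_snoc_zero]; simp [DS]
  · rw [DS_snoc G hk]
    nlinarith [le_max_right (slopeF G (s (k-1)) (s k) - slopeF G (s k) p) 0]

lemma snoc_le {k : ℕ} {s : ℕ → ℝ} {p : ℝ} {i : ℕ} (h : i ≤ k) : snoc k s p i = s i := by
  simp [snoc, h]
lemma snoc_last {k : ℕ} {s : ℕ → ℝ} {p : ℝ} : snoc k s p (k + 1) = p := by
  simp [snoc]


section Key
variable {G : ℝ → ℝ} {c' d' CA : ℝ}
variable (hCA : ∀ (k : ℕ) (s : ℕ → ℝ), (∀ i < k, s i < s (i + 1)) →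
    (∀ i ≤ k, s i ∈ Icc c' d') → DS G k s ≤ CA)
include hCA


/-- The key "finite convexity" inequality. -/
lemma slope_le_key {u v p q : ℝ} (hu : c' ≤ u) (huv : u < v) (hvp : v ≤ p) (hpq : p < q)
    (hqd : q ≤ d') :
    slopeF G u v ≤ slopeF G p q + (nvar G c' d' q - nvar G c' d' u) := by
  have hcu : c' ≤ min u d' := le_min hu (by linarith)
  have hne : (DSet G c' d' u).Nonempty := ⟨0, zero_mem_DSet hcu⟩
  have hminq : min q d' = q := min_eq_left hqd
  have hstep : ∀ D ∈ DSet G c' d' u, D + (slopeF G u v - slopeF G p q) ≤ nvar G c' d' q := by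
    rintro D ⟨k, s, h1, h2, rfl⟩
    have hmem' : ∀ i ≤ k, s i ∈ Icc c' u := fun i hi =>
      ⟨(h2 i hi).1, le_trans (h2 i hi).2 (min_le_left _ _)⟩
    -- first, get a chain ending exactly at u with at least the same DS
    obtain ⟨k₀, s₀, m1, m2, hlast, hDS⟩ :
        ∃ k₀ s₀, (∀ i < k₀, s₀ i < s₀ (i+1)) ∧ (∀ i ≤ k₀, s₀ i ∈ Icc c' u) ∧ s₀ k₀ = u ∧
          DS G k s ≤ DS G k₀ s₀ := by
      rcases eq_or_lt_of_le (hmem' k le_rfl).2 with h | h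
      · exact ⟨k, s, h1, hmem', h, le_rfl⟩
      · exact ⟨k + 1, snoc k s u, snoc_lt h1 h, snoc_mem hmem' ⟨hu, le_rfl⟩,
          snoc_last, DS_snoc_ge G k s u⟩
    -- append v (and p if distinct) and q
    have hmemq : ∀ i ≤ k₀, s₀ i ∈ Icc c' q := fun i hi =>
      ⟨(m2 i hi).1, le_trans (m2 i hi).2 (by linarith)⟩
    set s₁ := snoc k₀ s₀ v with hs₁
    have m1' : ∀ i < k₀ + 1, s₁ i < s₁ (i+1) := snoc_lt m1 (by rw [hlast]; exact huv)
    have m2' : ∀ i ≤ k₀ + 1, s₁ i ∈ Icc c' q := snoc_mem hmemq ⟨by linarith, by linarith⟩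
    have e1 : s₁ k₀ = u := by rw [hs₁, snoc_le le_rfl, hlast]
    have e2 : s₁ (k₀ + 1) = v := snoc_last
    have hDS1 : DS G k₀ s₀ ≤ DS G (k₀ + 1) s₁ := DS_snoc_ge G k₀ s₀ v
    rcases eq_or_lt_of_le hvp with rfl | hvp'
    · -- v = p : append q directly
      set s₂ := snoc (k₀ + 1) s₁ q with hs₂
      have m1'' : ∀ i < k₀ + 2, s₂ i < s₂ (i+1) := snoc_lt m1' (by rw [e2]; exact hpq)
      have m2'' : ∀ i ≤ k₀ + 2, s₂ i ∈ Icc c' q := snoc_mem m2' ⟨by linarith, le_rfl⟩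
      have hDS2 : DS G (k₀ + 2) s₂ =
          DS G (k₀ + 1) s₁ + max (slopeF G (s₁ k₀) (s₁ (k₀+1)) - slopeF G (s₁ (k₀+1)) q) 0 := by
        have := DS_snoc G (k := k₀ + 1) (by omega) s₁ q
        simpa using this
      have hmemDSet : DS G (k₀ + 2) s₂ ∈ DSet G c' d' q :=
        ⟨k₀ + 2, s₂, m1'', by rw [hminq]; exact m2'', rfl⟩
      have : DS G (k₀ + 2) s₂ ≤ nvar G c' d' q := le_csSup (DSet_bddAbove hCA q) hmemDSet
      rw [e1, e2] at hDS2
      have hmax : slopeF G u v - slopeF G v q ≤ max (slopeF G u v - slopeF G v q) 0 :=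
        le_max_left _ _
      linarith
    · -- v < p : append p then q
      set s₂ := snoc (k₀ + 1) s₁ p with hs₂
      have m1'' : ∀ i < k₀ + 2, s₂ i < s₂ (i+1) := snoc_lt m1' (by rw [e2]; exact hvp')
      have m2'' : ∀ i ≤ k₀ + 2, s₂ i ∈ Icc c' q := snoc_mem m2' ⟨by linarith, by linarith⟩
      have e3 : s₂ (k₀ + 1) = v := by rw [hs₂, snoc_le le_rfl, e2]
      have e4 : s₂ (k₀ + 2) = p := snoc_last
      have hDS2 : DS G (k₀ + 2) s₂ =
          DS G (k₀ + 1) s₁ + max (slopeF G (s₁ k₀) (s₁ (k₀+1)) - slopeF G (s₁ (k₀+1)) p) 0 := by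
        have := DS_snoc G (k := k₀ + 1) (by omega) s₁ p
        simpa using this
      set s₃ := snoc (k₀ + 2) s₂ q with hs₃
      have m1''' : ∀ i < k₀ + 3, s₃ i < s₃ (i+1) := snoc_lt m1'' (by rw [e4]; exact hpq)
      have m2''' : ∀ i ≤ k₀ + 3, s₃ i ∈ Icc c' q := snoc_mem m2'' ⟨by linarith, le_rfl⟩
      have hDS3 : DS G (k₀ + 3) s₃ =
          DS G (k₀ + 2) s₂ + max (slopeF G (s₂ (k₀+1)) (s₂ (k₀+2)) - slopeF G (s₂ (k₀+2)) q) 0 := by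
        have := DS_snoc G (k := k₀ + 2) (by omega) s₂ q
        simpa using this
      have hmemDSet : DS G (k₀ + 3) s₃ ∈ DSet G c' d' q :=
        ⟨k₀ + 3, s₃, m1''', by rw [hminq]; exact m2''', rfl⟩
      have hfin : DS G (k₀ + 3) s₃ ≤ nvar G c' d' q := le_csSup (DSet_bddAbove hCA q) hmemDSet
      rw [e1, e2] at hDS2
      rw [e3, e4] at hDS3
      have hmax1 : slopeF G u v - slopeF G v p ≤ max (slopeF G u v - slopeF G v p) 0 :=
        le_max_left _ _
      have hmax2 : slopeF G v p - slopeF G p q ≤ max (slopeF G v p - slopeF G p q) 0 :=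
        le_max_left _ _
      linarith
  have : nvar G c' d' u ≤ nvar G c' d' q - (slopeF G u v - slopeF G p q) :=
    csSup_le hne fun D hD => by linarith [hstep D hD]
  linarith

set_option maxHeartbeats 1000000 in
theorem dc_of_finite_convexity (hcd : c' < d') :
    ∃ g h : ℝ → ℝ, ConvexOn ℝ (Ioo c' d') g ∧ ConvexOn ℝ (Ioo c' d') h ∧
      ∀ x, g x - h x = G x := by
  set n : ℝ → ℝ := nvar G c' d' with hn
  have hmono : Monotone n := nvar_mono hCA
  have hint : ∀ x y : ℝ, IntervalIntegrable n MeasureTheory.volume x y :=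
    fun x y => hmono.intervalIntegrable
  set H : ℝ → ℝ := fun x => ∫ t in c'..x, n t with hH
  have hHdiff : ∀ x y : ℝ, H y - H x = ∫ t in x..y, n t := by
    intro x y
    have := intervalIntegral.integral_add_adjacent_intervals (hint c' x) (hint x y)
    simp only [hH]
    linarith
  have hHub : ∀ {x y : ℝ}, x ≤ y → H y - H x ≤ (y - x) * n y := by
    intro x y hxy
    rw [hHdiff]
    have h1 : ∫ t in x..y, n t ≤ ∫ _t in x..y, n y :=
      intervalIntegral.integral_mono_on hxy (hint x y) intervalIntegrable_const
        (fun t ht => hmono ht.2)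
    simpa [mul_comm] using h1
  have hHlb : ∀ {x y : ℝ}, x ≤ y → (y - x) * n x ≤ H y - H x := by
    intro x y hxy
    rw [hHdiff]
    have h1 : ∫ _t in x..y, n x ≤ ∫ t in x..y, n t :=
      intervalIntegral.integral_mono_on hxy intervalIntegrable_const (hint x y)
        (fun t ht => hmono ht.1)
    simpa [mul_comm] using h1
  have hconvH : ConvexOn ℝ (Ioo c' d') H := by
    apply convexOn_of_slope_mono_adjacent (convex_Ioo c' d')
    intro x y z _ _ hxy hyz
    have h1 : H y - H x ≤ (y - x) * n y := hHub (le_of_lt hxy)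
    have h2 : (z - y) * n y ≤ H z - H y := hHlb (le_of_lt hyz)
    rw [div_le_div_iff₀ (by linarith) (by linarith)]
    nlinarith
  refine ⟨fun x => G x + H x, H, ?_, hconvH, fun x => by ring⟩
  apply convexOn_of_slope_mono_adjacent (convex_Ioo c' d')
  rintro x y z ⟨hx1, hx2⟩ ⟨hz1, hz2⟩ hxy hyz
  have hyO : y ∈ Ioo c' d' := ⟨by linarith, by linarith⟩
  -- main estimate for partitions of sizes k, l
  have hmain : ∀ k l : ℕ, 1 ≤ k → 1 ≤ l →
      (z - y) * ((G y + H y) - (G x + H x)) ≤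
        (y - x) * ((G z + H z) - (G y + H y))
          + (y - x) * (z - y) / l * (n z - n y) + (y - x) * (z - y) / k * (n y - n x) := by
    intro k l hk hl
    have hk0 : (k:ℝ) ≠ 0 := Nat.cast_ne_zero.2 (by omega)
    have hl0 : (l:ℝ) ≠ 0 := Nat.cast_ne_zero.2 (by omega)
    have hkpos : (0:ℝ) < k := by positivity
    have hlpos : (0:ℝ) < l := by positivity
    set Δ : ℝ := (y - x) / k with hΔ
    set Δ' : ℝ := (z - y) / l with hΔ'
    have hΔpos : 0 < Δ := div_pos (by linarith) hkpos
    have hΔ'pos : 0 < Δ' := div_pos (by linarith) hlpos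
    set t : ℕ → ℝ := fun i => x + i * Δ with ht
    set r : ℕ → ℝ := fun j => y + j * Δ' with hr
    have htk : t k = y := by
      simp only [ht, hΔ]; field_simp; ring
    have hrl : r l = z := by
      simp only [hr, hΔ']; field_simp; ring
    have htstep : ∀ i : ℕ, t (i+1) - t i = Δ := by
      intro i; simp only [ht]; push_cast; ring
    have hrstep : ∀ j : ℕ, r (j+1) - r j = Δ' := by
      intro j; simp only [hr]; push_cast; ring
    have htmono : ∀ i : ℕ, t i < t (i + 1) := fun i => by
      have := htstep i; linarith
    have hrmono : ∀ j : ℕ, r j < r (j + 1) := fun j => by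
      have := hrstep j; linarith
    have hkD : (k:ℝ) * Δ = y - x := by rw [hΔ]; field_simp
    have hlD : (l:ℝ) * Δ' = z - y := by rw [hΔ']; field_simp
    have htmem : ∀ i ≤ k, t i ∈ Icc x y := by
      intro i hi
      have hik : (i:ℝ) ≤ k := by exact_mod_cast hi
      constructor
      · simp only [ht]; nlinarith [Nat.cast_nonneg (α := ℝ) i]
      · simp only [ht]; nlinarith
    have hrmem : ∀ j ≤ l, r j ∈ Icc y z := by
      intro j hj
      have hjl : (j:ℝ) ≤ l := by exact_mod_cast hj
      constructor
      · simp only [hr]; nlinarith [Nat.cast_nonneg (α := ℝ) j]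
      · simp only [hr]; nlinarith
    -- slope decomposition
    have hGslope : ∀ i : ℕ, G (t (i+1)) - G (t i) = Δ * slopeF G (t i) (t (i+1)) := by
      intro i
      rw [slopeF, htstep i]
      field_simp
    have hGslope' : ∀ j : ℕ, G (r (j+1)) - G (r j) = Δ' * slopeF G (r j) (r (j+1)) := by
      intro j
      rw [slopeF, hrstep j]
      field_simp
    have hkey : ∀ i < k, ∀ j < l,
        slopeF G (t i) (t (i+1)) ≤ slopeF G (r j) (r (j+1)) + (n (r (j+1)) - n (t i)) := by
      intro i hi j hj
      apply slope_le_key hCA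
      · have := (htmem i (le_of_lt hi)).1; linarith
      · exact htmono i
      · have h1 := (htmem (i+1) hi).2
        have h2 := (hrmem j (le_of_lt hj)).1
        linarith
      · exact hrmono j
      · have := (hrmem (j+1) hj).2; linarith
    have hsum1 : G y - G x = ∑ i ∈ Finset.range k, (G (t (i+1)) - G (t i)) := by
      rw [Finset.sum_range_sub (fun i => G (t i)) k, htk]
      simp [ht]
    have hsum2 : (∫ s in x..y, n s) = ∑ i ∈ Finset.range k, ∫ s in (t i)..(t (i+1)), n s := by
      rw [intervalIntegral.sum_integral_adjacent_intervals (fun i _ => hint _ _)]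
      congr 1
      · simp [ht]
      · exact htk.symm
    have hsum3 : ∀ i < k, (∫ s in (t i)..(t (i+1)), n s) ≤ Δ * n (t (i+1)) := by
      intro i hi
      have h1 : ∫ s in (t i)..(t (i+1)), n s ≤ ∫ _s in (t i)..(t (i+1)), n (t (i+1)) :=
        intervalIntegral.integral_mono_on (le_of_lt (htmono i)) (hint _ _)
          intervalIntegrable_const (fun s hs => hmono hs.2)
      rw [intervalIntegral.integral_const, htstep i] at h1
      simpa [mul_comm] using h1
    have hteln : ∑ i ∈ Finset.range k, (n (t (i+1)) - n (t i)) = n y - n x := by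
      rw [Finset.sum_range_sub (fun i => n (t i)) k, htk]
      simp [ht]
    have hup : ∀ j < l, (G y + H y) - (G x + H x) ≤
        (y - x) * (slopeF G (r j) (r (j+1)) + n (r (j+1))) + Δ * (n y - n x) := by
      intro j hj
      have e1 : (G y + H y) - (G x + H x) = (G y - G x) + (H y - H x) := by ring
      rw [e1, hHdiff x y, hsum1, hsum2, ← Finset.sum_add_distrib]
      have hbound : ∀ i ∈ Finset.range k,
          (G (t (i+1)) - G (t i)) + (∫ s in (t i)..(t (i+1)), n s) ≤
            Δ * (slopeF G (r j) (r (j+1)) + n (r (j+1))) + Δ * (n (t (i+1)) - n (t i)) := by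
        intro i hi
        rw [Finset.mem_range] at hi
        rw [hGslope i]
        have h1 := hsum3 i hi
        have h2 := mul_le_mul_of_nonneg_left (hkey i hi j hj) hΔpos.le
        calc Δ * slopeF G (t i) (t (i+1)) + ∫ s in (t i)..(t (i+1)), n s
            ≤ Δ * (slopeF G (r j) (r (j+1)) + (n (r (j+1)) - n (t i))) + Δ * n (t (i+1)) :=
              add_le_add h2 h1
          _ = Δ * (slopeF G (r j) (r (j+1)) + n (r (j+1))) + Δ * (n (t (i+1)) - n (t i)) := by
              ring
      calc ∑ i ∈ Finset.range k, ((G (t (i+1)) - G (t i)) + ∫ s in (t i)..(t (i+1)), n s)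
          ≤ ∑ i ∈ Finset.range k, (Δ * (slopeF G (r j) (r (j+1)) + n (r (j+1)))
              + Δ * (n (t (i+1)) - n (t i))) := Finset.sum_le_sum hbound
        _ = (k:ℝ) * (Δ * (slopeF G (r j) (r (j+1)) + n (r (j+1)))) + Δ * (n y - n x) := by
            rw [Finset.sum_add_distrib, Finset.sum_const, Finset.card_range, nsmul_eq_mul,
              ← Finset.mul_sum, hteln]
        _ = (y - x) * (slopeF G (r j) (r (j+1)) + n (r (j+1))) + Δ * (n y - n x) := by
            rw [← mul_assoc, hkD]
    have hsum1' : G z - G y = ∑ j ∈ Finset.range l, (G (r (j+1)) - G (r j)) := by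
      rw [Finset.sum_range_sub (fun j => G (r j)) l, hrl]
      simp [hr]
    have hsum2' : (∫ s in y..z, n s) = ∑ j ∈ Finset.range l, ∫ s in (r j)..(r (j+1)), n s := by
      rw [intervalIntegral.sum_integral_adjacent_intervals (fun j _ => hint _ _)]
      congr 1
      · simp [hr]
      · exact hrl.symm
    have hsum3' : ∀ j < l, Δ' * n (r j) ≤ ∫ s in (r j)..(r (j+1)), n s := by
      intro j hj
      have h1 : ∫ _s in (r j)..(r (j+1)), n (r j) ≤ ∫ s in (r j)..(r (j+1)), n s :=
        intervalIntegral.integral_mono_on (le_of_lt (hrmono j)) intervalIntegrable_const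
          (hint _ _) (fun s hs => hmono hs.1)
      rw [intervalIntegral.integral_const, hrstep j] at h1
      simpa [mul_comm] using h1
    have hteln' : ∑ j ∈ Finset.range l, (n (r (j+1)) - n (r j)) = n z - n y := by
      rw [Finset.sum_range_sub (fun j => n (r j)) l, hrl]
      simp [hr]
    have hlow : ∑ j ∈ Finset.range l, Δ' * (slopeF G (r j) (r (j+1)) + n (r (j+1))) ≤
        ((G z + H z) - (G y + H y)) + Δ' * (n z - n y) := by
      have e1 : (G z + H z) - (G y + H y) = (G z - G y) + (H z - H y) := by ring
      rw [e1, hHdiff y z, hsum1', hsum2', ← Finset.sum_add_distrib]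
      have hbound : ∀ j ∈ Finset.range l,
          Δ' * (slopeF G (r j) (r (j+1)) + n (r (j+1))) - Δ' * (n (r (j+1)) - n (r j)) ≤
            (G (r (j+1)) - G (r j)) + ∫ s in (r j)..(r (j+1)), n s := by
        intro j hj
        rw [Finset.mem_range] at hj
        rw [hGslope' j]
        have h1 := hsum3' j hj
        calc Δ' * (slopeF G (r j) (r (j+1)) + n (r (j+1))) - Δ' * (n (r (j+1)) - n (r j))
            = Δ' * slopeF G (r j) (r (j+1)) + Δ' * n (r j) := by ring
          _ ≤ Δ' * slopeF G (r j) (r (j+1)) + ∫ s in (r j)..(r (j+1)), n s :=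
              by linarith [h1]
      have h2 := Finset.sum_le_sum hbound
      rw [Finset.sum_sub_distrib] at h2
      have e6 : ∑ j ∈ Finset.range l, Δ' * (n (r (j+1)) - n (r j)) = Δ' * (n z - n y) := by
        rw [← Finset.mul_sum, hteln']
      rw [e6] at h2
      linarith
    -- combine
    have hsumA : ∀ j ∈ Finset.range l,
        Δ' * (((G y + H y) - (G x + H x)) - Δ * (n y - n x)) ≤
          Δ' * ((y - x) * (slopeF G (r j) (r (j+1)) + n (r (j+1)))) := by
      intro j hj
      rw [Finset.mem_range] at hj
      have := hup j hj
      have hyx : (0:ℝ) ≤ y - x := by linarith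
      apply mul_le_mul_of_nonneg_left _ hΔ'pos.le
      linarith
    have hS := Finset.sum_le_sum hsumA
    rw [Finset.sum_const, Finset.card_range, nsmul_eq_mul] at hS
    have hS2 : ∑ j ∈ Finset.range l, Δ' * ((y - x) * (slopeF G (r j) (r (j+1)) + n (r (j+1)))) =
        (y - x) * ∑ j ∈ Finset.range l, Δ' * (slopeF G (r j) (r (j+1)) + n (r (j+1))) := by
      rw [Finset.mul_sum]
      apply Finset.sum_congr rfl
      intro j _
      ring
    rw [hS2] at hS
    have hyx0 : (0:ℝ) ≤ y - x := by linarith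
    have hmul := mul_le_mul_of_nonneg_left hlow hyx0
    have hlhs : (l:ℝ) * (Δ' * (((G y + H y) - (G x + H x)) - Δ * (n y - n x))) =
        (z - y) * (((G y + H y) - (G x + H x)) - Δ * (n y - n x)) := by
      rw [← mul_assoc, hlD]
    rw [hlhs] at hS
    -- (z-y)*(gdiff - Δ*(ny-nx)) ≤ (y-x)*((gz-gy) + Δ'*(nz-ny))
    have h4 := le_trans hS hmul
    have e4 : (z - y) * (((G y + H y) - (G x + H x)) - Δ * (n y - n x)) =
        (z - y) * ((G y + H y) - (G x + H x)) - (z - y) * Δ * (n y - n x) := by ring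
    have e5 : (y - x) * (((G z + H z) - (G y + H y)) + Δ' * (n z - n y)) =
        (y - x) * ((G z + H z) - (G y + H y)) + (y - x) * Δ' * (n z - n y) := by ring
    rw [e4, e5] at h4
    have hfin : (z - y) * ((G y + H y) - (G x + H x)) ≤
        (y - x) * ((G z + H z) - (G y + H y)) + (y - x) * Δ' * (n z - n y)
          + (z - y) * Δ * (n y - n x) := by linarith
    have e2 : (y - x) * Δ' = (y - x) * (z - y) / l := by rw [hΔ']; ring
    have e3 : (z - y) * Δ = (y - x) * (z - y) / k := by rw [hΔ]; ring
    rw [e2, e3] at hfin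
    linarith
  -- conclude by letting k, l → ∞
  rw [div_le_div_iff₀ (by linarith : (0:ℝ) < y - x) (by linarith : (0:ℝ) < z - y)]
  have hmono_nzx : 0 ≤ n z - n x := sub_nonneg.2 (hmono (le_of_lt (lt_trans hxy hyz)))
  refine le_of_forall_pos_le_add ?_
  intro ε hε
  obtain ⟨N, hN⟩ := exists_nat_gt (((y - x) * (z - y) * (n z - n x)) / ε)
  have hN1 : 1 ≤ max N 1 := le_max_right _ _
  have h := hmain (max N 1) (max N 1) hN1 hN1
  have hNpos : (0:ℝ) < (max N 1 : ℕ) := by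
    exact_mod_cast Nat.lt_of_lt_of_le Nat.zero_lt_one hN1
  have hterm : (y - x) * (z - y) / (max N 1 : ℕ) * (n z - n y)
      + (y - x) * (z - y) / (max N 1 : ℕ) * (n y - n x) ≤ ε := by
    have e7 : (y - x) * (z - y) / (max N 1 : ℕ) * (n z - n y)
        + (y - x) * (z - y) / (max N 1 : ℕ) * (n y - n x)
        = (y - x) * (z - y) * (n z - n x) / (max N 1 : ℕ) := by ring
    rw [e7, div_le_iff₀ hNpos]
    have hNN : ((y - x) * (z - y) * (n z - n x)) / ε < (max N 1 : ℕ) := by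
      calc ((y - x) * (z - y) * (n z - n x)) / ε < N := hN
        _ ≤ ((max N 1 : ℕ) : ℝ) := by exact_mod_cast le_max_left N 1
    rw [div_lt_iff₀ hε] at hNN
    nlinarith [hNN, hε.le]
  linarith only [h, hterm]

end Key
end

noncomputable section
open Real
lemma arctan_diff_ge_aux {L μ μ' : ℝ} (h1 : |μ| ≤ L) (h2 : |μ'| ≤ L) (hle : μ' ≤ μ) :
    μ - μ' ≤ (1 + L^2) * (Real.arctan μ - Real.arctan μ') := by
  have hL : 0 ≤ L := le_trans (abs_nonneg μ) h1
  have h1' := abs_le.1 h1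
  have h2' := abs_le.1 h2
  set f : ℝ → ℝ := fun x => Real.arctan x - x / (1 + L^2) with hf
  have hderiv : ∀ x : ℝ, HasDerivAt f (1 / (1 + x^2) - 1 / (1 + L^2)) x := by
    intro x
    exact (Real.hasDerivAt_arctan x).sub ((hasDerivAt_id x).div_const (1 + L^2))
  have hmono : MonotoneOn f (Icc (-L) L) := by
    apply monotoneOn_of_deriv_nonneg (convex_Icc _ _)
    · exact Continuous.continuousOn (by
        have : Continuous f := by
          apply Real.continuous_arctan.sub
          exact continuous_id.div_const _
        exact this)
    · intro x hx
      exact (hderiv x).differentiableAt.differentiableWithinAt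
    · intro x hx
      rw [(hderiv x).deriv]
      rw [interior_Icc] at hx
      have hx2 : x^2 ≤ L^2 := sq_le_sq' (le_of_lt hx.1) (le_of_lt hx.2)
      have hpos : (0:ℝ) < 1 + x^2 := by positivity
      have hpos' : (0:ℝ) < 1 + L^2 := by positivity
      have := one_div_le_one_div_of_le hpos (by linarith : 1 + x^2 ≤ 1 + L^2)
      linarith
  have := hmono ⟨h2'.1, h2'.2⟩ ⟨h1'.1, h1'.2⟩ hle
  simp only [hf] at this
  have hpos' : (0:ℝ) < 1 + L^2 := by positivity
  have h5 : (μ - μ') / (1 + L^2) ≤ Real.arctan μ - Real.arctan μ' := by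
    have e : (μ - μ') / (1 + L^2) = μ / (1 + L^2) - μ' / (1 + L^2) := by ring
    rw [e]; linarith
  rw [div_le_iff₀ hpos'] at h5
  linarith

lemma arctan_diff_ge {L μ μ' : ℝ} (h1 : |μ| ≤ L) (h2 : |μ'| ≤ L) :
    |μ - μ'| ≤ (1 + L^2) * |Real.arctan μ - Real.arctan μ'| := by
  rcases le_total μ' μ with h | h
  · have := arctan_diff_ge_aux h1 h2 h
    have harc : Real.arctan μ' ≤ Real.arctan μ := Real.arctan_strictMono.monotone h
    rw [abs_of_nonneg (by linarith), abs_of_nonneg (by linarith)]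
    exact this
  · have := arctan_diff_ge_aux h2 h1 h
    have harc : Real.arctan μ ≤ Real.arctan μ' := Real.arctan_strictMono.monotone h
    rw [abs_of_nonpos (by linarith), abs_of_nonpos (by linarith)]
    linarith

variable {E : Type*} [NormedAddCommGroup E] [InnerProductSpace ℝ E]

open scoped RealInnerProductSpace

lemma angle_graph_chords {v w : E} (hv : ‖v‖ = 1) (hw : ‖w‖ = 1) (hvw : ⟪v, w⟫ = 0)
    (μ μ' : ℝ) : InnerProductGeometry.angle (w + μ • v) (w + μ' • v) =
      |Real.arctan μ - Real.arctan μ'| := by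
  have hwv : ⟪w, v⟫ = 0 := by rw [real_inner_comm]; exact hvw
  have hinner : ⟪w + μ • v, w + μ' • v⟫ = 1 + μ * μ' := by
    rw [inner_add_left, inner_add_right, inner_add_right, real_inner_smul_left,
      real_inner_smul_left, real_inner_smul_right, real_inner_smul_right,
      real_inner_self_eq_norm_sq, real_inner_self_eq_norm_sq, hw, hv, hwv, hvw]
    ring
  have hnorm : ∀ c : ℝ, ‖w + c • v‖ = Real.sqrt (1 + c^2) := by
    intro c
    have h1 : ‖w + c • v‖^2 = 1 + c^2 := by
      rw [norm_add_sq_real, real_inner_smul_right, hwv, norm_smul]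
      simp only [hv, hw, Real.norm_eq_abs, mul_one, one_pow, mul_zero]
      rw [sq_abs]
      ring
    rw [← h1, Real.sqrt_sq (norm_nonneg _)]
  have hsq : ∀ c : ℝ, (0:ℝ) < Real.sqrt (1 + c^2) := by
    intro c
    apply Real.sqrt_pos.2
    positivity
  rw [InnerProductGeometry.angle, hinner, hnorm, hnorm]
  have hcos : Real.cos (Real.arctan μ - Real.arctan μ') =
      (1 + μ * μ') / (Real.sqrt (1 + μ^2) * Real.sqrt (1 + μ'^2)) := by
    rw [Real.cos_sub, Real.cos_arctan, Real.cos_arctan, Real.sin_arctan, Real.sin_arctan]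
    have s1 : Real.sqrt (1 + μ^2) ≠ 0 := by positivity
    have s2 : Real.sqrt (1 + μ'^2) ≠ 0 := by positivity
    field_simp
    try ring
  have habs : |Real.arctan μ - Real.arctan μ'| ≤ π := by
    have a1 := Real.arctan_lt_pi_div_two μ
    have a2 := Real.neg_pi_div_two_lt_arctan μ
    have a3 := Real.arctan_lt_pi_div_two μ'
    have a4 := Real.neg_pi_div_two_lt_arctan μ'
    rw [abs_le]
    constructor <;> linarith
  rw [← hcos, ← Real.cos_abs]
  exact Real.arccos_cos (abs_nonneg _) habs

abbrev E2 := EuclideanSpace ℝ (Fin 2)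

lemma inner_E2 (x y : E2) : ⟪x, y⟫ = x 0 * y 0 + x 1 * y 1 := by
  rw [PiLp.inner_apply]
  simp [Fin.sum_univ_two, RCLike.inner_apply, conj_trivial]; ring

lemma norm_sq_E2 (x : E2) : ‖x‖ ^ 2 = x 0 ^ 2 + x 1 ^ 2 := by
  rw [← real_inner_self_eq_norm_sq, inner_E2]
  ring

def rot (v : E2) : E2 := WithLp.toLp 2 ![-(v 1), v 0]

lemma rot_apply0 (v : E2) : rot v 0 = -(v 1) := rfl
lemma rot_apply1 (v : E2) : rot v 1 = v 0 := rfl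

lemma norm_rot (v : E2) : ‖rot v‖ = ‖v‖ := by
  have h1 : ‖rot v‖ ^ 2 = ‖v‖ ^ 2 := by
    rw [norm_sq_E2, norm_sq_E2, rot_apply0, rot_apply1]
    ring
  nlinarith [norm_nonneg (rot v), norm_nonneg v, h1]

lemma inner_rot (v : E2) : ⟪v, rot v⟫ = 0 := by
  rw [inner_E2, rot_apply0, rot_apply1]
  ring

lemma expand_E2 (v : E2) (hv : ‖v‖ = 1) (x : E2) :
    x = ⟪x, rot v⟫ • rot v + ⟪x, v⟫ • v := by
  have hv2 : v 0 ^ 2 + v 1 ^ 2 = 1 := by rw [← norm_sq_E2, hv]; norm_num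
  ext i
  fin_cases i
  · simp only [PiLp.add_apply, PiLp.smul_apply, smul_eq_mul, inner_E2, rot_apply0, rot_apply1,
      rot, Fin.isValue, Matrix.cons_val_zero, Matrix.cons_val_one, Matrix.head_cons,
      Fin.zero_eta, Fin.mk_one]
    linear_combination (-(x 0)) * hv2
  · simp only [PiLp.add_apply, PiLp.smul_apply, smul_eq_mul, inner_E2, rot_apply0, rot_apply1,
      rot, Fin.isValue, Matrix.cons_val_zero, Matrix.cons_val_one, Matrix.head_cons,
      Fin.zero_eta, Fin.mk_one]
    linear_combination (-(x 1)) * hv2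

lemma angle_norm_smul {u u' : E} (hu : u ≠ 0) (hu' : u' ≠ 0) :
    InnerProductGeometry.angle (‖u‖⁻¹ • u) (‖u'‖⁻¹ • u') = InnerProductGeometry.angle u u' := by
  rw [InnerProductGeometry.angle_smul_left_of_pos _ _ (inv_pos.2 (norm_pos_iff.2 hu)),
    InnerProductGeometry.angle_smul_right_of_pos _ _ (inv_pos.2 (norm_pos_iff.2 hu'))]

lemma sum_shift_le {T : ℕ → ℝ} (hT : ∀ k, 0 ≤ T k) (p o q : ℕ) (h : p + o ≤ q) :
    ∑ rr ∈ Finset.range p, T (rr + o) ≤ ∑ kk ∈ Finset.range q, T kk := by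
  have e : ∑ rr ∈ Finset.range p, T (rr + o) = ∑ kk ∈ Finset.Ico o (p + o), T kk := by
    rw [Finset.sum_Ico_eq_sum_range]
    simp only [Nat.add_sub_cancel]
    apply Finset.sum_congr rfl
    intro i _
    rw [Nat.add_comm o i]
  rw [e]
  apply Finset.sum_le_sum_of_subset_of_nonneg
  · intro kk hkk
    rw [Finset.mem_Ico] at hkk
    rw [Finset.mem_range]
    omega
  · intro kk _ _
    exact hT kk

lemma turn_polyline {γ : ℝ → E} {a b C : ℝ}
    (hturn : ∀ (n : ℕ) (x : ℕ → ℝ), x 0 = a → x n = b →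
      (∀ k < n, x k < x (k + 1)) → (∀ k < n, γ (x (k + 1)) ≠ γ (x k)) →
      ∑ k ∈ Finset.range (n - 1),
        InnerProductGeometry.angle
          (‖γ (x (k + 1)) - γ (x k)‖⁻¹ • (γ (x (k + 1)) - γ (x k)))
          (‖γ (x (k + 2)) - γ (x (k + 1))‖⁻¹ • (γ (x (k + 2)) - γ (x (k + 1)))) < C)
    (m : ℕ) (t : ℕ → ℝ) (ht : ∀ r ≤ m, t r ∈ Icc a b) (hmono : ∀ r < m, t r < t (r + 1))
    (hne : ∀ r < m, γ (t (r + 1)) ≠ γ (t r)) :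
    ∑ rr ∈ Finset.range (m - 1),
      InnerProductGeometry.angle (γ (t (rr + 1)) - γ (t rr)) (γ (t (rr + 2)) - γ (t (rr + 1)))
      ≤ max C 0 := by
  rcases le_or_gt m 1 with hm | hm
  · have : m - 1 = 0 := by omega
    rw [this]
    simp [le_max_right]
  -- m ≥ 2
  -- helper for the final step
  have final : ∀ (nn : ℕ) (x : ℕ → ℝ) (o : ℕ), x 0 = a → x nn = b →
      (∀ k < nn, x k < x (k + 1)) → (∀ k < nn, γ (x (k + 1)) ≠ γ (x k)) →
      (m - 1) + o ≤ nn - 1 →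
      (∀ rr < m - 1, γ (x (rr + o + 1)) - γ (x (rr + o)) = γ (t (rr + 1)) - γ (t rr)) →
      (∀ rr < m - 1, γ (x (rr + o + 2)) - γ (x (rr + o + 1)) = γ (t (rr + 2)) - γ (t (rr + 1))) →
      ∑ rr ∈ Finset.range (m - 1),
        InnerProductGeometry.angle (γ (t (rr + 1)) - γ (t rr)) (γ (t (rr + 2)) - γ (t (rr + 1)))
        ≤ max C 0 := by
    intro nn x o hx0 hxn hxmono hxne hle h1 h2
    set T : ℕ → ℝ := fun kk =>
      InnerProductGeometry.angle
        (‖γ (x (kk + 1)) - γ (x kk)‖⁻¹ • (γ (x (kk + 1)) - γ (x kk)))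
        (‖γ (x (kk + 2)) - γ (x (kk + 1))‖⁻¹ • (γ (x (kk + 2)) - γ (x (kk + 1)))) with hT
    have hTnonneg : ∀ kk, 0 ≤ T kk := fun kk => InnerProductGeometry.angle_nonneg _ _
    have hsum := hturn nn x hx0 hxn hxmono hxne
    have hterm : ∀ rr < m - 1,
        InnerProductGeometry.angle (γ (t (rr + 1)) - γ (t rr)) (γ (t (rr + 2)) - γ (t (rr + 1)))
          = T (rr + o) := by
      intro rr hrr
      rw [hT]
      simp only
      rw [h1 rr hrr, h2 rr hrr]
      rw [angle_norm_smul (sub_ne_zero.2 (hne rr (by omega))) (sub_ne_zero.2 (hne (rr + 1) (by omega)))]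
    calc ∑ rr ∈ Finset.range (m - 1),
          InnerProductGeometry.angle (γ (t (rr + 1)) - γ (t rr)) (γ (t (rr + 2)) - γ (t (rr + 1)))
        = ∑ rr ∈ Finset.range (m - 1), T (rr + o) := by
          apply Finset.sum_congr rfl
          intro rr hrr
          exact hterm rr (Finset.mem_range.1 hrr)
      _ ≤ ∑ kk ∈ Finset.range (nn - 1), T kk := sum_shift_le hTnonneg _ _ _ hle
      _ ≤ max C 0 := le_trans (le_of_lt hsum) (le_max_left _ _)
  have hta : ∀ r ≤ m, a ≤ t r := fun r hr => (ht r hr).1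
  have htb : ∀ r ≤ m, t r ≤ b := fun r hr => (ht r hr).2
  have htmono' : ∀ r r', r < r' → r' ≤ m → t r < t r' := by
    intro r r' hrr' hr'
    induction r' with
    | zero => omega
    | succ q ih =>
      rcases Nat.lt_or_ge r q with h | h
      · exact lt_trans (ih h (by omega)) (hmono q (by omega))
      · have : r = q := by omega
        subst this
        exact hmono r (by omega)
  classical
  set o : ℕ := if γ a = γ (t 0) then 0 else 1 with ho
  set ob : ℕ := if γ b = γ (t m) then 0 else 1 with hob
  set nn : ℕ := m + o + ob with hnn
  have ho01 : o = 0 ∨ o = 1 := by rw [ho]; split <;> simp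
  have hob01 : ob = 0 ∨ ob = 1 := by rw [hob]; split <;> simp
  have hpa : o = 0 → γ a = γ (t 0) := by
    intro h; by_contra hc; rw [ho, if_neg hc] at h; omega
  have hpa' : o = 1 → γ a ≠ γ (t 0) := by
    intro h hc; rw [ho, if_pos hc] at h; omega
  have hpb : ob = 0 → γ b = γ (t m) := by
    intro h; by_contra hc; rw [hob, if_neg hc] at h; omega
  have hpb' : ob = 1 → γ b ≠ γ (t m) := by
    intro h hc; rw [hob, if_pos hc] at h; omega
  set x : ℕ → ℝ := fun r => if r = 0 then a else if r = nn then b else t (r - o) with hx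
  have hnn2 : 2 ≤ nn := by omega
  have hx0 : x 0 = a := by simp [hx]
  have hxnn : x nn = b := by
    simp [hx, show nn ≠ 0 by omega]
  have hxmid : ∀ r, 1 ≤ r → r ≤ nn - 1 → x r = t (r - o) := by
    intro r h1 h2
    simp [hx, show r ≠ 0 by omega, show r ≠ nn by omega]
  have hγ : ∀ r ≤ m, γ (x (r + o)) = γ (t r) := by
    intro r hr
    rcases Nat.eq_zero_or_pos (r + o) with h0 | h0
    · have hr0 : r = 0 := by omega
      have ho0 : o = 0 := by omega
      rw [hr0, ho0, show (0:ℕ) + 0 = 0 from rfl, hx0]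
      exact hpa ho0
    · rcases eq_or_ne (r + o) nn with he | hne'
      · have hbm : ob = 0 ∧ r = m := by omega
        rw [he, hxnn, hbm.2]
        exact hpb hbm.1
      · rw [hxmid (r + o) (by omega) (by omega), Nat.add_sub_cancel]
  have hxmono : ∀ k < nn, x k < x (k + 1) := by
    intro k hk
    rcases Nat.eq_zero_or_pos k with rfl | hk0
    · rw [hx0]
      rw [hxmid 1 le_rfl (by omega)]
      rcases ho01 with ho0 | ho1
      · rw [ho0]
        show a < t 1
        calc a ≤ t 0 := hta 0 (by omega)
          _ < t 1 := hmono 0 (by omega)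
      · rw [ho1]
        show a < t 0
        have h1 : a ≤ t 0 := hta 0 (by omega)
        have h2 : a ≠ t 0 := fun hc => hpa' ho1 (by rw [← hc])
        exact lt_of_le_of_ne h1 h2
    · rcases eq_or_ne (k + 1) nn with he | hne'
      · rw [he, hxnn, hxmid k (by omega) (by omega)]
        rcases hob01 with hb0 | hb1
        · have : k - o = m - 1 := by omega
          rw [this]
          calc t (m - 1) < t m := htmono' (m-1) m (by omega) le_rfl
            _ ≤ b := htb m le_rfl
        · have : k - o = m := by omega
          rw [this]
          have h1 : t m ≤ b := htb m le_rfl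
          have h2 : t m ≠ b := by
            intro hc
            exact hpb' hb1 (by rw [hc])
          exact lt_of_le_of_ne h1 h2
      · rw [hxmid k (by omega) (by omega), hxmid (k+1) (by omega) (by omega)]
        have e : k + 1 - o = (k - o) + 1 := by omega
        rw [e]
        exact hmono (k - o) (by omega)
  have hxne : ∀ k < nn, γ (x (k + 1)) ≠ γ (x k) := by
    intro k hk
    rcases Nat.eq_zero_or_pos k with rfl | hk0
    · rw [hx0]
      rw [hxmid 1 le_rfl (by omega)]
      rcases ho01 with ho0 | ho1
      · rw [ho0, hpa ho0]
        show γ (t 1) ≠ γ (t 0)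
        exact hne 0 (by omega)
      · rw [ho1]
        show γ (t 0) ≠ γ a
        exact fun hc => hpa' ho1 hc.symm
    · rcases eq_or_ne (k + 1) nn with he | hne'
      · rw [he, hxnn, hxmid k (by omega) (by omega)]
        rcases hob01 with hb0 | hb1
        · have : k - o = m - 1 := by omega
          rw [this, hpb hb0]
          have := hne (m-1) (by omega)
          have e : m - 1 + 1 = m := by omega
          rw [e] at this
          exact this
        · have : k - o = m := by omega
          rw [this]
          exact hpb' hb1
      · rw [hxmid k (by omega) (by omega), hxmid (k+1) (by omega) (by omega)]
        have e : k + 1 - o = (k - o) + 1 := by omega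
        rw [e]
        exact hne (k - o) (by omega)
  refine final nn x o hx0 hxnn hxmono hxne (by omega) ?_ ?_
  · intro rr hrr
    rw [show rr + o + 1 = (rr + 1) + o by omega, hγ (rr + 1) (by omega), hγ rr (by omega)]
  · intro rr hrr
    rw [show rr + o + 2 = (rr + 2) + o by omega, show rr + o + 1 = (rr + 1) + o by omega,
      hγ (rr + 2) (by omega), hγ (rr + 1) (by omega)]

end

noncomputable section
open Real
set_option maxHeartbeats 3000000 in
/-- If `γ : [a,b] → ℝ²` is a continuous curve of finite turn whose image is
a Lipschitz graph, then its image is a DC graph. -/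
theorem image_of_finite_turn_curve_is_DC_graph
    (a b : ℝ) (hab : a ≤ b) (γ : ℝ → EuclideanSpace ℝ (Fin 2))
    (hcont : ContinuousOn γ (Icc a b))
    (hturn : HasFiniteTurn γ a b)
    (hLip : ∃ L : ℝ, 0 < L ∧ ∃ v : EuclideanSpace ℝ (Fin 2), ‖v‖ = 1 ∧
      IsLipschitzGraphInDir L v (γ '' Icc a b)) :
    IsDCGraph (γ '' Icc a b) := by

  classical
  obtain ⟨C, hC⟩ := hturn
  obtain ⟨L, hL, v, hv, K₀, f₀, hK₀c, hK₀conv, hperp, hlip, hM⟩ := hLip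
  set w : E2 := rot v with hwdef
  have hw : ‖w‖ = 1 := by rw [hwdef, norm_rot, hv]
  have hvw : ⟪v, w⟫ = 0 := inner_rot v
  have hwv : ⟪w, v⟫ = 0 := by rw [real_inner_comm]; exact hvw
  have hww : ⟪w, w⟫ = 1 := by
    rw [real_inner_self_eq_norm_sq, hw]; norm_num
  -- each point of K₀ lies on the line spanned by w
  have hK₀w : ∀ p ∈ K₀, p = ⟪p, w⟫ • w := by
    intro p hp
    have := expand_E2 v hv p
    rw [hperp p hp] at this
    simpa using this
  set M : Set E2 := γ '' Icc a b with hMdef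
  have hMne : M.Nonempty := ⟨γ a, a, ⟨le_rfl, hab⟩, rfl⟩
  have hMcompact : IsCompact M := isCompact_Icc.image_of_continuousOn hcont
  obtain ⟨R, hR⟩ := isBounded_iff_forall_norm_le.1 hMcompact.isBounded
  set S : Set ℝ := {s : ℝ | s • w ∈ K₀} with hSdef
  have hSclosed : IsClosed S := by
    have hcont' : Continuous fun s : ℝ => s • w := continuous_id.smul continuous_const
    exact hK₀c.preimage hcont'
  have hSconv : Convex ℝ S := by
    have : S = (LinearMap.toSpanSingleton ℝ E2 w) ⁻¹' K₀ := rfl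
    rw [this]
    exact hK₀conv.linear_preimage _
  -- members of S are bounded by R
  have hSbdd : ∀ s ∈ S, |s| ≤ R := by
    intro s hs
    have hp : s • w + f₀ (s • w) • v ∈ M := by
      rw [hM]; exact ⟨s • w, hs, rfl⟩
    have hnorm : ‖s • w‖ ≤ ‖s • w + f₀ (s • w) • v‖ := by
      have h2 : ‖s • w + f₀ (s • w) • v‖^2 = ‖s • w‖^2 + ‖f₀ (s • w) • v‖^2 := by
        rw [norm_add_sq_real]
        have : ⟪s • w, f₀ (s • w) • v⟫ = 0 := by
          rw [real_inner_smul_left, real_inner_smul_right, hwv]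
          ring
        rw [this]
        ring
      nlinarith [norm_nonneg (s • w), norm_nonneg (s • w + f₀ (s • w) • v)]
    have : ‖s • w‖ = |s| := by
      rw [norm_smul, hw, Real.norm_eq_abs, mul_one]
    rw [← this]
    exact le_trans hnorm (hR _ hp)
  have hSne : S.Nonempty := by
    obtain ⟨p, hp⟩ := hMne
    rw [hM] at hp
    obtain ⟨q, hq, _⟩ := hp
    exact ⟨⟪q, w⟫, by rw [hSdef, mem_setOf_eq, ← hK₀w q hq]; exact hq⟩
  have hScompact : IsCompact S := by
    rw [Metric.isCompact_iff_isClosed_bounded]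
    refine ⟨hSclosed, ?_⟩
    rw [isBounded_iff_forall_norm_le]
    exact ⟨R, fun s hs => hSbdd s hs⟩
  set c : ℝ := sInf S with hcdef
  set d : ℝ := sSup S with hddef
  have hcS : c ∈ S := hScompact.sInf_mem hSne
  have hdS : d ∈ S := hScompact.sSup_mem hSne
  have hcd : c ≤ d := csInf_le_csSup hSne hScompact.bddBelow hScompact.bddAbove
  have hSIcc : S = Icc c d := by
    apply Subset.antisymm
    · intro s hs
      exact ⟨csInf_le hScompact.bddBelow hs, le_csSup hScompact.bddAbove hs⟩
    · exact hSconv.ordConnected.out hcS hdS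
  -- the Lipschitz function over [c,d], extended to ℝ by clamping
  set clamp : ℝ → ℝ := fun s => max c (min s d) with hclampdef
  have hclamp_mem : ∀ s, clamp s ∈ Icc c d := by
    intro s
    refine ⟨le_max_left _ _, ?_⟩
    rw [hclampdef]
    simp only [max_le_iff]
    exact ⟨hcd, min_le_right _ _⟩
  have hclamp_id : ∀ s ∈ Icc c d, clamp s = s := by
    rintro s ⟨h1, h2⟩
    rw [hclampdef]
    simp only [min_eq_left h2, max_eq_right h1]
  have hclamp_lip : ∀ s s', |clamp s - clamp s'| ≤ |s - s'| := by
    intro s s'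
    rw [hclampdef]
    simp only
    calc |max c (min s d) - max c (min s' d)|
        = |max (min s d) c - max (min s' d) c| := by rw [max_comm c _, max_comm c _]
      _ ≤ |min s d - min s' d| := abs_max_sub_max_le_abs _ _ _
      _ ≤ max |s - s'| |d - d| := abs_min_sub_min_le_max _ _ _ _
      _ = |s - s'| := by simp
  set F : ℝ → ℝ := fun s => f₀ (clamp s • w) with hFdef
  have hmemK₀ : ∀ s ∈ Icc c d, s • w ∈ K₀ := by
    intro s hs
    rw [← hSIcc] at hs
    exact hs
  have hFlip : ∀ s s', |F s - F s'| ≤ L * |s - s'| := by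
    intro s s'
    have h1 := hlip (clamp s • w) (hmemK₀ _ (hclamp_mem s)) (clamp s' • w) (hmemK₀ _ (hclamp_mem s'))
    rw [hFdef]
    refine le_trans h1 ?_
    have : ‖clamp s • w - clamp s' • w‖ = |clamp s - clamp s'| := by
      rw [← sub_smul, norm_smul, hw, Real.norm_eq_abs, mul_one]
    rw [this]
    exact mul_le_mul_of_nonneg_left (hclamp_lip s s') (le_of_lt hL)
  have hslope_abs : ∀ u v' : ℝ, u ≠ v' → |slopeF F u v'| ≤ L := by
    intro u v' huv
    rw [slopeF, abs_div]
    rw [div_le_iff₀ (abs_pos.2 (sub_ne_zero.2 (Ne.symm huv)))]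
    calc |F v' - F u| ≤ L * |v' - u| := hFlip v' u
      _ = L * |v' - u| := rfl
  -- the parametrization of the graph
  set P : ℝ → E2 := fun s => s • w + F s • v with hPdef
  have hPproj : ∀ s, ⟪P s, w⟫ = s := by
    intro s
    rw [hPdef]
    simp only
    rw [inner_add_left, real_inner_smul_left, real_inner_smul_left, hww, hvw]
    ring
  have hPinj : ∀ s s', s ≠ s' → P s ≠ P s' := by
    intro s s' hss he
    apply hss
    rw [← hPproj s, ← hPproj s', he]
  have hMP : M = P '' Icc c d := by
    rw [hM]
    apply Subset.antisymm
    · rintro p ⟨q, hq, rfl⟩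
      have hqw : q = ⟪q, w⟫ • w := hK₀w q hq
      have hqS : ⟪q, w⟫ ∈ S := by rw [hSdef, mem_setOf_eq, ← hqw]; exact hq
      refine ⟨⟪q, w⟫, by rwa [← hSIcc], ?_⟩
      rw [hPdef]
      simp only
      rw [hFdef]
      simp only
      rw [hclamp_id _ (by rwa [← hSIcc]), ← hqw]
    · rintro p ⟨s, hs, rfl⟩
      refine ⟨s • w, hmemK₀ s hs, ?_⟩
      rw [hPdef, hFdef]
      simp only
      rw [hclamp_id _ hs]
  -- the projection of the curve
  set φ : ℝ → ℝ := fun t => ⟪γ t, w⟫ with hφdef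
  have hφcont : ContinuousOn φ (Icc a b) := by
    exact ContinuousOn.inner hcont continuousOn_const
  have hγP : ∀ t ∈ Icc a b, γ t = P (φ t) ∧ φ t ∈ Icc c d := by
    intro t ht
    have : γ t ∈ M := ⟨t, ht, rfl⟩
    rw [hMP] at this
    obtain ⟨s, hs, he⟩ := this
    have : φ t = s := by rw [hφdef]; simp only; rw [← he, hPproj]
    rw [this, ← he]
    exact ⟨rfl, hs⟩
  have hsurj : ∀ s ∈ Icc c d, ∃ t ∈ Icc a b, φ t = s := by
    intro s hs
    have : P s ∈ M := by rw [hMP]; exact ⟨s, hs, rfl⟩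
    rw [hMdef] at this
    obtain ⟨t, ht, he⟩ := this
    exact ⟨t, ht, by rw [hφdef]; simp only; rw [he, hPproj]⟩
  have hφa : φ a ∈ Icc c d := (hγP a ⟨le_rfl, hab⟩).2
  -- first hitting times
  set Es : ℝ → Set ℝ := fun s₁ => {t | t ∈ Icc a b ∧ φ t = s₁} with hEsdef
  have hEsclosed : ∀ s₁, IsClosed (Es s₁) := by
    intro s₁
    have he : Es s₁ = Icc a b ∩ φ ⁻¹' {s₁} := by
      ext t; simp [hEsdef, mem_preimage]
    rw [he]
    exact hφcont.preimage_isClosed_of_isClosed isClosed_Icc isClosed_singleton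
  have hEscompact : ∀ s₁, IsCompact (Es s₁) :=
    fun s₁ => isCompact_Icc.of_isClosed_subset (hEsclosed s₁) (fun t ht => ht.1)
  have hEsne : ∀ s₁ ∈ Icc c d, (Es s₁).Nonempty := by
    intro s₁ hs₁
    obtain ⟨t, ht, he⟩ := hsurj s₁ hs₁
    exact ⟨t, ht, he⟩
  set T : ℝ → ℝ := fun s₁ => sInf (Es s₁) with hTdef
  have hT1 : ∀ s₁ ∈ Icc c d, T s₁ ∈ Icc a b ∧ φ (T s₁) = s₁ := by
    intro s₁ hs₁
    exact (hEscompact s₁).sInf_mem (hEsne s₁ hs₁)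
  have hTle : ∀ s₁, ∀ t ∈ Es s₁, T s₁ ≤ t :=
    fun s₁ t ht => csInf_le (hEscompact s₁).bddBelow ht
  have hTmonoU : ∀ s₁ s₂, s₁ ∈ Icc c d → s₂ ∈ Icc c d → φ a < s₁ → s₁ < s₂ →
      T s₁ < T s₂ := by
    intro s₁ s₂ hs₁ hs₂ hlt hss
    obtain ⟨hmem2, hval2⟩ := hT1 s₂ hs₂
    have hsub : Icc a (T s₂) ⊆ Icc a b := fun u hu => ⟨hu.1, le_trans hu.2 hmem2.2⟩
    have hIVT := intermediate_value_Icc hmem2.1 (hφcont.mono hsub)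
    have hmm : s₁ ∈ Icc (φ a) (φ (T s₂)) := ⟨le_of_lt hlt, by rw [hval2]; exact le_of_lt hss⟩
    obtain ⟨t, ht, he⟩ := hIVT hmm
    have h1 : T s₁ ≤ t := hTle s₁ t ⟨hsub ht, he⟩
    have h2 : t ≤ T s₂ := ht.2
    rcases eq_or_lt_of_le (le_trans h1 h2) with heq | h
    · exfalso
      apply ne_of_lt hss
      rw [← (hT1 s₁ hs₁).2, heq, hval2]
    · exact h
  have hTmonoL : ∀ s₁ s₂, s₁ ∈ Icc c d → s₂ ∈ Icc c d → s₂ < s₁ → s₁ < φ a →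
      T s₁ < T s₂ := by
    intro s₁ s₂ hs₁ hs₂ hss hlt
    obtain ⟨hmem2, hval2⟩ := hT1 s₂ hs₂
    have hsub : Icc a (T s₂) ⊆ Icc a b := fun u hu => ⟨hu.1, le_trans hu.2 hmem2.2⟩
    have hIVT := intermediate_value_Icc' hmem2.1 (hφcont.mono hsub)
    have hmm : s₁ ∈ Icc (φ (T s₂)) (φ a) := ⟨by rw [hval2]; exact le_of_lt hss, le_of_lt hlt⟩
    obtain ⟨t, ht, he⟩ := hIVT hmm
    have h1 : T s₁ ≤ t := hTle s₁ t ⟨hsub ht, he⟩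
    have h2 : t ≤ T s₂ := ht.2
    rcases eq_or_lt_of_le (le_trans h1 h2) with heq | h
    · exfalso
      apply ne_of_gt hss
      rw [← (hT1 s₁ hs₁).2, heq, hval2]
    · exact h
  have hγT : ∀ s₁ ∈ Icc c d, γ (T s₁) = P s₁ := by
    intro s₁ hs₁
    obtain ⟨hmem, hval⟩ := hT1 s₁ hs₁
    rw [(hγP (T s₁) hmem).1, hval]
  -- the key per-vertex bound: slope decrease is controlled by the chord angle
  have hchord : ∀ p q : ℝ, p < q → P q - P p = (q - p) • (w + slopeF F p q • v) := by
    intro p q h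
    have hne : q - p ≠ 0 := sub_ne_zero.2 (ne_of_gt h)
    have e1 : (q - p) * ((F q - F p) / (q - p)) = F q - F p := by field_simp
    rw [hPdef]
    simp only
    rw [smul_add, smul_smul, slopeF, e1, sub_smul]
    module
  have hslope_angle : ∀ p q p' q' : ℝ, p < q → p' < q' →
      max (slopeF F p q - slopeF F p' q') 0 ≤
        (1 + L^2) * InnerProductGeometry.angle (P q - P p) (P q' - P p') := by
    intro p q p' q' h h'
    have e1 : InnerProductGeometry.angle (P q - P p) (P q' - P p') =
        |Real.arctan (slopeF F p q) - Real.arctan (slopeF F p' q')| := by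
      rw [hchord p q h, hchord p' q' h',
        InnerProductGeometry.angle_smul_left_of_pos _ _ (by linarith : (0:ℝ) < q - p),
        InnerProductGeometry.angle_smul_right_of_pos _ _ (by linarith : (0:ℝ) < q' - p'),
        angle_graph_chords hv hw hvw]
    rw [e1]
    have h2 := arctan_diff_ge (hslope_abs p q (ne_of_lt h)) (hslope_abs p' q' (ne_of_lt h'))
    apply max_le
    · exact le_trans (le_trans (le_abs_self _) h2) le_rfl
    · positivity
  -- ============ Step A : uniform bound on downward slope variation ============
  set CA : ℝ := 2*(1+L^2)*(max C 0) + 14*L with hCAdef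
  have hCA : ∀ (k : ℕ) (sq : ℕ → ℝ), (∀ i < k, sq i < sq (i + 1)) →
      (∀ i ≤ k, sq i ∈ Icc (c-1) (d+1)) → DS F k sq ≤ CA := by
    intro k sq hsmono _hsmem
    have hsmono' : ∀ p q, p < q → q ≤ k → sq p < sq q := by
      intro p q hpq hq
      induction q with
      | zero => omega
      | succ q' ih =>
        rcases Nat.lt_or_ge p q' with h | h
        · exact lt_trans (ih h (by omega)) (hsmono q' (by omega))
        · have : p = q' := by omega
          subst this
          exact hsmono p (by omega)
    have hsle : ∀ p q, p ≤ q → q ≤ k → sq p ≤ sq q := by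
      intro p q hpq hq
      rcases eq_or_lt_of_le hpq with rfl | h
      · exact le_rfl
      · exact le_of_lt (hsmono' p q h hq)
    have hFc : ∀ u, u ≤ c → F u = f₀ (c • w) := by
      intro u hu
      rw [hFdef]
      simp only
      congr 2
      rw [hclampdef]
      simp only
      rw [min_eq_left (le_trans hu hcd), max_eq_left hu]
    have hFd : ∀ u, d ≤ u → F u = f₀ (d • w) := by
      intro u hu
      rw [hFdef]
      simp only
      congr 2
      rw [hclampdef]
      simp only
      rw [min_eq_right hu, max_eq_right hcd]
    set term : ℕ → ℝ :=
      fun i => max (slopeF F (sq i) (sq (i+1)) - slopeF F (sq (i+1)) (sq (i+2))) 0 with htermdef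
    have htermnonneg : ∀ i, 0 ≤ term i := fun i => le_max_right _ _
    have hterm2L : ∀ i, i + 2 ≤ k → term i ≤ 2*L := by
      intro i hik
      rw [htermdef]
      simp only
      apply max_le
      · have h1 := hslope_abs (sq i) (sq (i+1)) (ne_of_lt (hsmono i (by omega)))
        have h2 := hslope_abs (sq (i+1)) (sq (i+2)) (ne_of_lt (hsmono (i+1) (by omega)))
        have := abs_le.1 h1
        have := abs_le.1 h2
        linarith [abs_le.1 h1, abs_le.1 h2]
      · linarith
    set R : Finset ℕ := Finset.range (k-1) with hRdef
    have hRk : ∀ i ∈ R, i + 2 ≤ k := by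
      intro i hi
      rw [hRdef, Finset.mem_range] at hi
      omega
    set pU : ℕ → Prop := fun i => c ≤ sq i ∧ sq (i+2) ≤ d ∧ φ a < sq i with hpUdef
    set pL : ℕ → Prop := fun i => c ≤ sq i ∧ sq (i+2) ≤ d ∧ sq (i+2) < φ a with hpLdef
    set pZ : ℕ → Prop := fun i => sq (i+2) ≤ c ∨ d ≤ sq i with hpZdef
    have hDSeq : DS F k sq = ∑ i ∈ R, term i := rfl
    rw [hDSeq]
    have hsplit1 := Finset.sum_filter_add_sum_filter_not R pU term
    have hsplit2 := Finset.sum_filter_add_sum_filter_not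
      (R.filter (fun i => ¬ pU i)) pL term
    have hsplit3 := Finset.sum_filter_add_sum_filter_not
      ((R.filter (fun i => ¬ pU i)).filter (fun i => ¬ pL i)) pZ term
    -- zero class
    have hZzero : ∑ i ∈ ((R.filter (fun i => ¬ pU i)).filter (fun i => ¬ pL i)).filter pZ,
        term i = 0 := by
      apply Finset.sum_eq_zero
      intro i hi
      rw [Finset.mem_filter] at hi
      have hiR : i ∈ R := (Finset.mem_filter.1 (Finset.mem_filter.1 hi.1).1).1
      have hik := hRk i hiR
      rw [htermdef]
      simp only
      rcases hi.2 with hc1 | hd1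
      · have e1 : F (sq i) = f₀ (c • w) := hFc _ (by
          have := hsmono' i (i+2) (by omega) hik
          linarith)
        have e2 : F (sq (i+1)) = f₀ (c • w) := hFc _ (by
          have := hsmono (i+1) (by omega)
          linarith)
        have e3 : F (sq (i+2)) = f₀ (c • w) := hFc _ hc1
        rw [slopeF, slopeF, e1, e2, e3]
        simp
      · have e1 : F (sq i) = f₀ (d • w) := hFd _ hd1
        have e2 : F (sq (i+1)) = f₀ (d • w) := hFd _ (by
          have := hsmono i (by omega)
          linarith)
        have e3 : F (sq (i+2)) = f₀ (d • w) := hFd _ (by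
          have := hsmono' i (i+2) (by omega) hik
          linarith)
        rw [slopeF, slopeF, e1, e2, e3]
        simp
    -- small classes: at most 7 vertices, each bounded by 2L
    have hsmall : ∑ i ∈ ((R.filter (fun i => ¬ pU i)).filter (fun i => ¬ pL i)).filter
        (fun i => ¬ pZ i), term i ≤ 14*L := by
      set B1 : Finset ℕ := R.filter (fun i => sq i < c ∧ c < sq (i+2)) with hB1
      set B2 : Finset ℕ := R.filter (fun i => sq i < d ∧ d < sq (i+2)) with hB2
      set B3 : Finset ℕ := R.filter (fun i => sq i ≤ φ a ∧ φ a ≤ sq (i+2)) with hB3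
      have hsub : ((R.filter (fun i => ¬ pU i)).filter (fun i => ¬ pL i)).filter
          (fun i => ¬ pZ i) ⊆ B1 ∪ B2 ∪ B3 := by
        intro i hi
        rw [Finset.mem_filter] at hi
        obtain ⟨hi2, hiZ⟩ := hi
        rw [Finset.mem_filter] at hi2
        obtain ⟨hi3, hiL⟩ := hi2
        rw [Finset.mem_filter] at hi3
        obtain ⟨hiR, hiU⟩ := hi3
        rw [hpZdef] at hiZ
        have hz1 : ¬ (sq (i+2) ≤ c) := fun hcc => hiZ (Or.inl hcc)
        have hz2 : ¬ (d ≤ sq i) := fun hcc => hiZ (Or.inr hcc)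
        rw [Finset.mem_union, Finset.mem_union]
        by_cases h1 : sq i < c
        · exact Or.inl (Or.inl (Finset.mem_filter.2 ⟨hiR, h1, lt_of_not_ge hz1⟩))
        · by_cases h2 : d < sq (i+2)
          · exact Or.inl (Or.inr (Finset.mem_filter.2 ⟨hiR, lt_of_not_ge hz2, h2⟩))
          · refine Or.inr (Finset.mem_filter.2 ⟨hiR, ?_, ?_⟩)
            · simp only [hpUdef] at hiU
              push_neg at hiU
              exact hiU (le_of_not_gt h1) (le_of_not_gt h2)
            · simp only [hpLdef] at hiL
              push_neg at hiL
              exact hiL (le_of_not_gt h1) (le_of_not_gt h2)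
      have hcard1 : B1.card ≤ 2 := by
        apply card_le_of_gap B1 1
        intro i hi j hj hij
        rw [hB1, Finset.mem_filter] at hi hj
        by_contra hcon
        have h1 : i + 2 ≤ j := by omega
        have := hsle (i+2) j h1 (by have := hRk j hj.1; omega)
        have := hi.2.2
        have := hj.2.1
        linarith
      have hcard2 : B2.card ≤ 2 := by
        apply card_le_of_gap B2 1
        intro i hi j hj hij
        rw [hB2, Finset.mem_filter] at hi hj
        by_contra hcon
        have h1 : i + 2 ≤ j := by omega
        have := hsle (i+2) j h1 (by have := hRk j hj.1; omega)
        have := hi.2.2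
        have := hj.2.1
        linarith
      have hcard3 : B3.card ≤ 3 := by
        apply card_le_of_gap B3 2
        intro i hi j hj hij
        rw [hB3, Finset.mem_filter] at hi hj
        by_contra hcon
        have h1 : i + 2 ≤ j := by omega
        have h2 := hsmono' (i+2) j (by omega) (by have := hRk j hj.1; omega)
        have := hi.2.2
        have := hj.2.1
        linarith
      calc ∑ i ∈ ((R.filter (fun i => ¬ pU i)).filter (fun i => ¬ pL i)).filter
            (fun i => ¬ pZ i), term i
          ≤ ∑ i ∈ B1 ∪ B2 ∪ B3, term i :=
            Finset.sum_le_sum_of_subset_of_nonneg hsub (fun i _ _ => htermnonneg i)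
        _ ≤ (B1 ∪ B2 ∪ B3).card • (2*L) := by
            apply Finset.sum_le_card_nsmul
            intro i hi
            apply hterm2L
            apply hRk
            rcases Finset.mem_union.1 hi with h | h
            · rcases Finset.mem_union.1 h with h' | h'
              · exact (Finset.mem_filter.1 h').1
              · exact (Finset.mem_filter.1 h').1
            · exact (Finset.mem_filter.1 h).1
        _ ≤ 14*L := by
            have hc : (B1 ∪ B2 ∪ B3).card ≤ 7 := by
              calc (B1 ∪ B2 ∪ B3).card ≤ (B1 ∪ B2).card + B3.card := Finset.card_union_le _ _
                _ ≤ B1.card + B2.card + B3.card := by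
                    have := Finset.card_union_le B1 B2
                    omega
                _ ≤ 7 := by omega
            rw [nsmul_eq_mul]
            have h2L : (0:ℝ) ≤ 2*L := by linarith
            calc ((B1 ∪ B2 ∪ B3).card : ℝ) * (2*L) ≤ 7 * (2*L) := by
                  apply mul_le_mul_of_nonneg_right _ h2L
                  exact_mod_cast hc
              _ = 14*L := by ring
    have hUPsum : ∑ i ∈ R.filter pU, term i ≤ (1 + L^2) * max C 0 := by
      rcases (R.filter pU).eq_empty_or_nonempty with he | hne
      · rw [he]
        simp only [Finset.sum_empty]
        positivity
      set J : Finset ℕ := (Finset.range (k+1)).filter (fun j => φ a < sq j ∧ sq j ≤ d) with hJdef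
      have hUJ : ∀ i ∈ R.filter pU, i ∈ J ∧ i + 1 ∈ J ∧ i + 2 ∈ J := by
        intro i hi
        rw [Finset.mem_filter] at hi
        obtain ⟨hiR, hU⟩ := hi
        simp only [hpUdef] at hU
        obtain ⟨hc1, hd1, hφ1⟩ := hU
        have hik := hRk i hiR
        have h01 : sq i < sq (i+1) := hsmono i (by omega)
        have h12 : sq (i+1) < sq (i+2) := hsmono (i+1) (by omega)
        refine ⟨?_, ?_, ?_⟩
        · rw [hJdef, Finset.mem_filter, Finset.mem_range]
          exact ⟨by omega, hφ1, by linarith⟩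
        · rw [hJdef, Finset.mem_filter, Finset.mem_range]
          exact ⟨by omega, by linarith, by linarith⟩
        · rw [hJdef, Finset.mem_filter, Finset.mem_range]
          exact ⟨by omega, by linarith, hd1⟩
      obtain ⟨i₀, hi₀⟩ := hne
      have hJne : J.Nonempty := ⟨i₀, (hUJ i₀ hi₀).1⟩
      have hJspec : ∀ j ∈ J, j ≤ k ∧ (φ a < sq j ∧ sq j ≤ d) := by
        intro j hj
        rw [hJdef, Finset.mem_filter, Finset.mem_range] at hj
        exact ⟨by omega, hj.2⟩
      set j₀ := J.min' hJne with hj₀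
      set j₁ := J.max' hJne with hj₁
      have hj₀₁ : j₀ ≤ j₁ := J.min'_le j₁ (J.max'_mem hJne)
      have hj₁k : j₁ ≤ k := (hJspec j₁ (J.max'_mem hJne)).1
      have hJprop : ∀ j, j₀ ≤ j → j ≤ j₁ → φ a < sq j ∧ sq j ≤ d := by
        intro j h1 h2
        have hm0 := hJspec j₀ (J.min'_mem hJne)
        have hm1 := hJspec j₁ (J.max'_mem hJne)
        constructor
        · exact lt_of_lt_of_le hm0.2.1 (hsle j₀ j h1 (by omega))
        · exact le_trans (hsle j j₁ h2 (by omega)) hm1.2.2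
      have hmemJ : ∀ j, j₀ ≤ j → j ≤ j₁ → sq j ∈ Icc c d := by
        intro j h1 h2
        obtain ⟨ha1, ha2⟩ := hJprop j h1 h2
        exact ⟨le_trans hφa.1 (le_of_lt ha1), ha2⟩
      set m' : ℕ := j₁ - j₀ with hm'
      set tt : ℕ → ℝ := fun r => T (sq (j₀ + r)) with htt
      have htmem : ∀ r ≤ m', tt r ∈ Icc a b := by
        intro r hr
        exact (hT1 _ (hmemJ (j₀ + r) (by omega) (by omega))).1
      have httmono : ∀ r < m', tt r < tt (r+1) := by
        intro r hr
        rw [htt]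
        simp only
        have e : j₀ + (r+1) = (j₀ + r) + 1 := by omega
        rw [e]
        apply hTmonoU _ _ (hmemJ _ (by omega) (by omega)) (hmemJ _ (by omega) (by omega))
        · exact (hJprop (j₀+r) (by omega) (by omega)).1
        · exact hsmono (j₀ + r) (by omega)
      have hγtt : ∀ r ≤ m', γ (tt r) = P (sq (j₀ + r)) := by
        intro r hr
        rw [htt]
        simp only
        exact hγT _ (hmemJ _ (by omega) (by omega))
      have htne : ∀ r < m', γ (tt (r+1)) ≠ γ (tt r) := by
        intro r hr
        have e : j₀ + (r+1) = (j₀ + r) + 1 := by omega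
        rw [hγtt (r+1) (by omega), hγtt r (by omega), e]
        exact hPinj _ _ (ne_of_gt (hsmono (j₀ + r) (by omega)))
      have hturnsum := turn_polyline hC m' tt htmem httmono htne
      set AngT : ℕ → ℝ := fun rr =>
        InnerProductGeometry.angle (γ (tt (rr+1)) - γ (tt rr))
          (γ (tt (rr+2)) - γ (tt (rr+1))) with hAngT
      have hAngTnonneg : ∀ rr, 0 ≤ AngT rr := fun rr => InnerProductGeometry.angle_nonneg _ _
      have hterm_le : ∀ i ∈ R.filter pU, term i ≤ (1 + L^2) * AngT (i - j₀) := by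
        intro i hi
        obtain ⟨hiJ, hiJ1, hiJ2⟩ := hUJ i hi
        have hj₀i : j₀ ≤ i := J.min'_le i hiJ
        have hij₁ : i + 2 ≤ j₁ := J.le_max' (i+2) hiJ2
        have hiR : i ∈ R := (Finset.mem_filter.1 hi).1
        have hik := hRk i hiR
        have e0 : j₀ + (i - j₀) = i := by omega
        have e1 : j₀ + (i - j₀ + 1) = i + 1 := by omega
        have e2 : j₀ + (i - j₀ + 2) = i + 2 := by omega
        have hA : AngT (i - j₀) = InnerProductGeometry.angle
            (P (sq (i+1)) - P (sq i)) (P (sq (i+2)) - P (sq (i+1))) := by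
          rw [hAngT]
          simp only
          rw [hγtt (i - j₀) (by omega), hγtt (i - j₀ + 1) (by omega),
            hγtt (i - j₀ + 2) (by omega), e0, e1, e2]
        rw [hA]
        simp only [htermdef]
        exact hslope_angle _ _ _ _ (hsmono i (by omega)) (hsmono (i+1) (by omega))
      calc ∑ i ∈ R.filter pU, term i
          ≤ ∑ i ∈ R.filter pU, (1 + L^2) * AngT (i - j₀) := Finset.sum_le_sum hterm_le
        _ = (1 + L^2) * ∑ i ∈ R.filter pU, AngT (i - j₀) := by rw [Finset.mul_sum]
        _ ≤ (1 + L^2) * ∑ rr ∈ Finset.range (m' - 1), AngT rr := by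
            apply mul_le_mul_of_nonneg_left _ (by positivity)
            have himg : ∑ i ∈ R.filter pU, AngT (i - j₀)
                = ∑ rr ∈ (R.filter pU).image (fun i => i - j₀), AngT rr := by
              rw [Finset.sum_image]
              intro i hi j hj hij
              have h1 := J.min'_le i (hUJ i hi).1
              have h2 := J.min'_le j (hUJ j hj).1
              simp only at hij
              omega
            rw [himg]
            apply Finset.sum_le_sum_of_subset_of_nonneg
            · intro rr hrr
              rw [Finset.mem_image] at hrr
              obtain ⟨i, hi, rfl⟩ := hrr
              have h1 := J.min'_le i (hUJ i hi).1
              have h2 := J.le_max' (i+2) (hUJ i hi).2.2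
              rw [Finset.mem_range]
              omega
            · intro rr _ _
              exact hAngTnonneg rr
        _ ≤ (1 + L^2) * max C 0 := mul_le_mul_of_nonneg_left hturnsum (by positivity)
    have hLOsum : ∑ i ∈ (R.filter (fun i => ¬ pU i)).filter pL, term i
        ≤ (1 + L^2) * max C 0 := by
      set V := (R.filter (fun i => ¬ pU i)).filter pL with hV
      rcases V.eq_empty_or_nonempty with he | hne
      · rw [he]
        simp only [Finset.sum_empty]
        positivity
      have hVmem : ∀ i ∈ V, i ∈ R ∧ (c ≤ sq i ∧ sq (i+2) ≤ d ∧ sq (i+2) < φ a) := by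
        intro i hi
        rw [hV, Finset.mem_filter] at hi
        obtain ⟨hi1, hL'⟩ := hi
        simp only [hpLdef] at hL'
        exact ⟨(Finset.mem_filter.1 hi1).1, hL'⟩
      set J' : Finset ℕ := (Finset.range (k+1)).filter (fun j => sq j < φ a ∧ c ≤ sq j) with hJ'
      have hVJ : ∀ i ∈ V, i ∈ J' ∧ i + 1 ∈ J' ∧ i + 2 ∈ J' := by
        intro i hi
        obtain ⟨hiR, hc1, hd1, hφ1⟩ := hVmem i hi
        have hik := hRk i hiR
        have h01 : sq i < sq (i+1) := hsmono i (by omega)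
        have h12 : sq (i+1) < sq (i+2) := hsmono (i+1) (by omega)
        refine ⟨?_, ?_, ?_⟩
        · rw [hJ', Finset.mem_filter, Finset.mem_range]
          exact ⟨by omega, by linarith, hc1⟩
        · rw [hJ', Finset.mem_filter, Finset.mem_range]
          exact ⟨by omega, by linarith, by linarith⟩
        · rw [hJ', Finset.mem_filter, Finset.mem_range]
          exact ⟨by omega, hφ1, by linarith⟩
      obtain ⟨i₀, hi₀⟩ := hne
      have hJne : J'.Nonempty := ⟨i₀, (hVJ i₀ hi₀).1⟩
      have hJspec : ∀ j ∈ J', j ≤ k ∧ (sq j < φ a ∧ c ≤ sq j) := by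
        intro j hj
        rw [hJ', Finset.mem_filter, Finset.mem_range] at hj
        exact ⟨by omega, hj.2⟩
      set j₂ := J'.min' hJne with hj₂
      set j₃ := J'.max' hJne with hj₃
      have hj₂₃ : j₂ ≤ j₃ := J'.min'_le j₃ (J'.max'_mem hJne)
      have hj₃k : j₃ ≤ k := (hJspec j₃ (J'.max'_mem hJne)).1
      have hJprop : ∀ j, j₂ ≤ j → j ≤ j₃ → sq j < φ a ∧ c ≤ sq j := by
        intro j h1 h2
        have hm0 := hJspec j₂ (J'.min'_mem hJne)
        have hm1 := hJspec j₃ (J'.max'_mem hJne)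
        exact ⟨lt_of_le_of_lt (hsle j j₃ h2 (by omega)) hm1.2.1,
          le_trans hm0.2.2 (hsle j₂ j h1 (by omega))⟩
      have hmemJ : ∀ j, j₂ ≤ j → j ≤ j₃ → sq j ∈ Icc c d := by
        intro j h1 h2
        obtain ⟨ha1, ha2⟩ := hJprop j h1 h2
        exact ⟨ha2, le_trans (le_of_lt ha1) hφa.2⟩
      set m'' : ℕ := j₃ - j₂ with hm''
      set tt : ℕ → ℝ := fun r => T (sq (j₃ - r)) with htt
      have htmem : ∀ r ≤ m'', tt r ∈ Icc a b := by
        intro r hr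
        exact (hT1 _ (hmemJ (j₃ - r) (by omega) (by omega))).1
      have httmono : ∀ r < m'', tt r < tt (r+1) := by
        intro r hr
        rw [htt]
        simp only
        apply hTmonoL _ _ (hmemJ _ (by omega) (by omega)) (hmemJ _ (by omega) (by omega))
        · exact hsmono' (j₃ - (r+1)) (j₃ - r) (by omega) (by omega)
        · exact (hJprop (j₃ - r) (by omega) (by omega)).1
      have hγtt : ∀ r ≤ m'', γ (tt r) = P (sq (j₃ - r)) := by
        intro r hr
        rw [htt]
        simp only
        exact hγT _ (hmemJ _ (by omega) (by omega))
      have htne : ∀ r < m'', γ (tt (r+1)) ≠ γ (tt r) := by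
        intro r hr
        rw [hγtt (r+1) (by omega), hγtt r (by omega)]
        exact hPinj _ _ (ne_of_lt (hsmono' (j₃ - (r+1)) (j₃ - r) (by omega) (by omega)))
      have hturnsum := turn_polyline hC m'' tt htmem httmono htne
      set AngT : ℕ → ℝ := fun rr =>
        InnerProductGeometry.angle (γ (tt (rr+1)) - γ (tt rr))
          (γ (tt (rr+2)) - γ (tt (rr+1))) with hAngT
      have hAngTnonneg : ∀ rr, 0 ≤ AngT rr := fun rr => InnerProductGeometry.angle_nonneg _ _
      have hterm_le : ∀ i ∈ V, term i ≤ (1 + L^2) * AngT (j₃ - (i+2)) := by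
        intro i hi
        obtain ⟨hiJ, hiJ1, hiJ2⟩ := hVJ i hi
        have h1 : j₂ ≤ i := J'.min'_le i hiJ
        have h2 : i + 2 ≤ j₃ := J'.le_max' (i+2) hiJ2
        have hiR := (hVmem i hi).1
        have hik := hRk i hiR
        have e0 : j₃ - (j₃ - (i+2)) = i + 2 := by omega
        have e1 : j₃ - (j₃ - (i+2) + 1) = i + 1 := by omega
        have e2 : j₃ - (j₃ - (i+2) + 2) = i := by omega
        have hA : AngT (j₃ - (i+2)) = InnerProductGeometry.angle
            (P (sq (i+1)) - P (sq (i+2))) (P (sq i) - P (sq (i+1))) := by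
          rw [hAngT]
          simp only
          rw [hγtt (j₃ - (i+2)) (by omega), hγtt (j₃ - (i+2) + 1) (by omega),
            hγtt (j₃ - (i+2) + 2) (by omega), e0, e1, e2]
        have hA2 : AngT (j₃ - (i+2)) = InnerProductGeometry.angle
            (P (sq (i+1)) - P (sq i)) (P (sq (i+2)) - P (sq (i+1))) := by
          rw [hA, show P (sq (i+1)) - P (sq (i+2)) = -(P (sq (i+2)) - P (sq (i+1)))
              from (neg_sub _ _).symm,
            show P (sq i) - P (sq (i+1)) = -(P (sq (i+1)) - P (sq i)) from (neg_sub _ _).symm,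
            InnerProductGeometry.angle_neg_neg, InnerProductGeometry.angle_comm]
        rw [hA2]
        simp only [htermdef]
        exact hslope_angle _ _ _ _ (hsmono i (by omega)) (hsmono (i+1) (by omega))
      calc ∑ i ∈ V, term i
          ≤ ∑ i ∈ V, (1 + L^2) * AngT (j₃ - (i+2)) := Finset.sum_le_sum hterm_le
        _ = (1 + L^2) * ∑ i ∈ V, AngT (j₃ - (i+2)) := by rw [Finset.mul_sum]
        _ ≤ (1 + L^2) * ∑ rr ∈ Finset.range (m'' - 1), AngT rr := by
            apply mul_le_mul_of_nonneg_left _ (by positivity)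
            have himg : ∑ i ∈ V, AngT (j₃ - (i+2))
                = ∑ rr ∈ V.image (fun i => j₃ - (i+2)), AngT rr := by
              rw [Finset.sum_image]
              intro i hi j hj hij
              have h1 := J'.le_max' (i+2) (hVJ i hi).2.2
              have h2 := J'.le_max' (j+2) (hVJ j hj).2.2
              simp only at hij
              omega
            rw [himg]
            apply Finset.sum_le_sum_of_subset_of_nonneg
            · intro rr hrr
              rw [Finset.mem_image] at hrr
              obtain ⟨i, hi, rfl⟩ := hrr
              have h1 := J'.min'_le i (hVJ i hi).1
              have h2 := J'.le_max' (i+2) (hVJ i hi).2.2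
              rw [Finset.mem_range]
              omega
            · intro rr _ _
              exact hAngTnonneg rr
        _ ≤ (1 + L^2) * max C 0 := mul_le_mul_of_nonneg_left hturnsum (by positivity)
    rw [hCAdef]
    linarith only [hsplit1, hsplit2, hsplit3, hUPsum, hLOsum, hZzero, hsmall]
  -- ============ conclusion ============
  obtain ⟨g, h, hg, hh, hgh⟩ := dc_of_finite_convexity hCA (by linarith : c - 1 < d + 1)
  refine ⟨v, w, hv, hw, hvw, Icc c d, Ioo (c-1) (d+1), isClosed_Icc, convex_Icc c d, isOpen_Ioo,
    convex_Ioo (c-1) (d+1), ?_, g, h, hg, hh, ?_⟩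
  · intro x hx
    exact ⟨by linarith [hx.1], by linarith [hx.2]⟩
  · rw [hMP]
    apply image_congr
    intro s₁ _
    rw [hgh s₁]

end
end

section
/- Let r > 0 and let f₁, …, f_n : (−r, r) → ℝ be DC functions. Then there exist DC functions g₁, …, g_n : (−r, r) → ℝ such that g_i ≤ g_{i+1} on (−r, r) for every i = 1, …, n−1, and such that ⋃_{i=1}^n graph(f_i) = ⋃_{i=1}^n graph(g_i). -/
open Set

/-- `f` is DC on the set `I`: it is the difference of two functions convex on `I`. -/
def IsDCOn (f : ℝ → ℝ) (I : Set ℝ) : Prop :=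
  ∃ g h : ℝ → ℝ, ConvexOn ℝ I g ∧ ConvexOn ℝ I h ∧ ∀ x ∈ I, f x = g x - h x

lemma IsDCOn.max' {f g : ℝ → ℝ} {I : Set ℝ} (hf : IsDCOn f I) (hg : IsDCOn g I) :
    IsDCOn (fun x => max (f x) (g x)) I := by
  obtain ⟨a, b, ha, hb, hab⟩ := hf
  obtain ⟨c, d, hc, hd, hcd⟩ := hg
  refine ⟨fun x => max (a x + d x) (c x + b x), fun x => b x + d x,
    (ha.add hd).sup (hc.add hb), hb.add hd, ?_⟩
  intro x hx
  dsimp only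
  rw [hab x hx, hcd x hx]
  have h1 : max (a x - b x) (c x - d x) + (b x + d x)
      = max ((a x - b x) + (b x + d x)) ((c x - d x) + (b x + d x)) :=
    (max_add_add_right _ _ _).symm
  have h2 : (a x - b x) + (b x + d x) = a x + d x := by ring
  have h3 : (c x - d x) + (b x + d x) = c x + b x := by ring
  rw [h2, h3] at h1
  linarith [h1]

lemma IsDCOn.min' {f g : ℝ → ℝ} {I : Set ℝ} (hf : IsDCOn f I) (hg : IsDCOn g I) :
    IsDCOn (fun x => min (f x) (g x)) I := by
  obtain ⟨a, b, ha, hb, hab⟩ := hf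
  obtain ⟨c, d, hc, hd, hcd⟩ := hg
  refine ⟨fun x => a x + c x, fun x => max (a x + d x) (c x + b x),
    ha.add hc, (ha.add hd).sup (hc.add hb), ?_⟩
  intro x hx
  dsimp only
  rw [hab x hx, hcd x hx]
  rcases le_total (a x - b x) (c x - d x) with h | h
  · rw [min_eq_left h, max_eq_right (by linarith)]
    ring
  · rw [min_eq_right h, max_eq_left (by linarith)]
    ring

/-- Insert a function into a (pointwise sorted) list of functions by compare-exchanges. -/
noncomputable def insFn (f : ℝ → ℝ) : List (ℝ → ℝ) → List (ℝ → ℝ)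
  | [] => [f]
  | h :: t => (fun x => min (f x) (h x)) :: insFn (fun x => max (f x) (h x)) t

noncomputable def sortFns (l : List (ℝ → ℝ)) : List (ℝ → ℝ) := l.foldr insFn []

lemma insFn_length (l : List (ℝ → ℝ)) : ∀ f, (insFn f l).length = l.length + 1 := by
  induction l with
  | nil => intro f; rfl
  | cons h t ih => intro f; simp [insFn, ih]

lemma insFn_dc {I : Set ℝ} (l : List (ℝ → ℝ)) :
    ∀ f, IsDCOn f I → (∀ g ∈ l, IsDCOn g I) → ∀ g ∈ insFn f l, IsDCOn g I := by
  induction l with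
  | nil =>
    intro f hf _ g hg
    simp [insFn] at hg
    subst hg; exact hf
  | cons h t ih =>
    intro f hf hl g hg
    simp only [insFn, List.mem_cons] at hg
    rcases hg with rfl | hg
    · exact hf.min' (hl h (by simp))
    · exact ih _ (hf.max' (hl h (by simp))) (fun g hg => hl g (by simp [hg])) g hg

lemma insFn_perm (l : List (ℝ → ℝ)) (x : ℝ) :
    ∀ f, ((insFn f l).map (fun g => g x)).Perm (f x :: l.map (fun g => g x)) := by
  induction l with
  | nil => intro f; simp [insFn]
  | cons h t ih =>
    intro f
    simp only [insFn, List.map_cons]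
    refine ((ih (fun x => max (f x) (h x))).cons _).trans ?_
    rcases le_total (f x) (h x) with hle | hle
    · rw [min_eq_left hle, max_eq_right hle]
    · rw [min_eq_right hle, max_eq_left hle]
      exact List.Perm.swap _ _ _

lemma insFn_sorted (l : List (ℝ → ℝ)) (x : ℝ) :
    ∀ f, (l.map (fun g => g x)).Pairwise (· ≤ ·) →
      ((insFn f l).map (fun g => g x)).Pairwise (· ≤ ·) := by
  induction l with
  | nil => intro f _; simp [insFn]
  | cons h t ih =>
    intro f hl
    rw [List.map_cons, List.pairwise_cons] at hl
    simp only [insFn, List.map_cons, List.pairwise_cons]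
    constructor
    · intro b hb
      have hb' : b ∈ (fun x => max (f x) (h x)) x :: t.map (fun g => g x) :=
        (insFn_perm t x _).mem_iff.mp hb
      rcases List.mem_cons.mp hb' with rfl | hb''
      · exact le_trans (min_le_left _ _) (le_max_left _ _)
      · exact le_trans (min_le_right _ _) (hl.1 b hb'')
    · exact ih _ hl.2

lemma sortFns_length (l : List (ℝ → ℝ)) : (sortFns l).length = l.length := by
  induction l with
  | nil => rfl
  | cons h t ih => simp [sortFns, List.foldr] at ih ⊢; rw [insFn_length, ih]

lemma sortFns_dc {I : Set ℝ} (l : List (ℝ → ℝ)) (hl : ∀ g ∈ l, IsDCOn g I) :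
    ∀ g ∈ sortFns l, IsDCOn g I := by
  induction l with
  | nil => intro g hg; simp [sortFns] at hg
  | cons h t ih =>
    intro g hg
    exact insFn_dc _ _ (hl h (by simp)) (ih (fun g hg => hl g (by simp [hg]))) g hg

lemma sortFns_perm (l : List (ℝ → ℝ)) (x : ℝ) :
    ((sortFns l).map (fun g => g x)).Perm (l.map (fun g => g x)) := by
  induction l with
  | nil => simp [sortFns]
  | cons h t ih =>
    simp only [List.map_cons]
    exact (insFn_perm _ x h).trans (ih.cons _)

lemma sortFns_sorted (l : List (ℝ → ℝ)) (x : ℝ) :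
    ((sortFns l).map (fun g => g x)).Pairwise (· ≤ ·) := by
  induction l with
  | nil => simp [sortFns]
  | cons h t ih => exact insFn_sorted _ x h ih

/-- Given DC functions `f 1, …, f n` on `(−r, r)`, there are DC functions
`g 1 ≤ g 2 ≤ ⋯ ≤ g n` on `(−r, r)` with the same union of graphs. -/
theorem exists_ordered_DC_functions_with_same_union_of_graphs
    (r : ℝ) (hr : 0 < r) (n : ℕ) (f : Fin n → ℝ → ℝ)
    (hf : ∀ i, IsDCOn (f i) (Ioo (-r) r)) :
    ∃ g : Fin n → ℝ → ℝ,
      (∀ i, IsDCOn (g i) (Ioo (-r) r)) ∧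
      (∀ i j : Fin n, (j : ℕ) = (i : ℕ) + 1 → ∀ x ∈ Ioo (-r) r, g i x ≤ g j x) ∧
      (⋃ i, (fun x => (x, f i x)) '' Ioo (-r) r) =
        (⋃ i, (fun x => (x, g i x)) '' Ioo (-r) r) := by
  classical
  have hdcL : ∀ g ∈ sortFns (List.ofFn f), IsDCOn g (Ioo (-r) r) := by
    refine sortFns_dc (List.ofFn f) ?_
    intro g hg
    obtain ⟨i, rfl⟩ := List.mem_ofFn.mp hg
    exact hf i
  have hlen : (sortFns (List.ofFn f)).length = n := by
    rw [sortFns_length, List.length_ofFn]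
  refine ⟨fun i => (sortFns (List.ofFn f)).get (Fin.cast hlen.symm i), ?_, ?_, ?_⟩
  · intro i
    exact hdcL _ (List.mem_iff_get.mpr ⟨_, rfl⟩)
  · intro i j hij x hx
    have hs := sortFns_sorted (List.ofFn f) x
    have hlt : (i : ℕ) < (j : ℕ) := by omega
    have hlen' : ((sortFns (List.ofFn f)).map (fun g => g x)).length = n := by
      rw [List.length_map, hlen]
    have := hs.rel_get_of_lt (a := ⟨(i : ℕ), by rw [hlen']; exact i.isLt⟩)
      (b := ⟨(j : ℕ), by rw [hlen']; exact j.isLt⟩) (by simpa using hlt)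
    simpa using this
  · ext p
    simp only [mem_iUnion, mem_image]
    constructor
    · rintro ⟨i, x, hx, rfl⟩
      have hmem : f i x ∈ (List.ofFn f).map (fun g => g x) :=
        List.mem_map.mpr ⟨f i, List.mem_ofFn.mpr ⟨i, rfl⟩, rfl⟩
      have hmem' : f i x ∈ (sortFns (List.ofFn f)).map (fun g => g x) :=
        (sortFns_perm (List.ofFn f) x).mem_iff.mpr hmem
      obtain ⟨G, hG, hGx⟩ := List.mem_map.mp hmem'
      obtain ⟨k, rfl⟩ := List.mem_iff_get.mp hG
      refine ⟨Fin.cast hlen k, x, hx, ?_⟩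
      have hk : Fin.cast hlen.symm (Fin.cast hlen k) = k := by ext; simp
      rw [hk, hGx]
    · rintro ⟨i, x, hx, rfl⟩
      have hmem : (sortFns (List.ofFn f)).get (Fin.cast hlen.symm i) x ∈
          (sortFns (List.ofFn f)).map (fun g => g x) :=
        List.mem_map.mpr ⟨_, List.mem_iff_get.mpr ⟨_, rfl⟩, rfl⟩
      have hmem' : (sortFns (List.ofFn f)).get (Fin.cast hlen.symm i) x ∈
          (List.ofFn f).map (fun g => g x) :=
        (sortFns_perm (List.ofFn f) x).mem_iff.mp hmem
      obtain ⟨G, hG, hGx⟩ := List.mem_map.mp hmem'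
      obtain ⟨j, rfl⟩ := List.mem_ofFn.mp hG
      exact ⟨j, x, hx, by rw [hGx]⟩
end

section
/- Let a > 0, L > 0, and let g, h : ℝ → ℝ be DC and L-Lipschitz functions with g ≥ h on ℝ. Set M = {(x,y) ∈ ℝ² : 0 ≤ x ≤ a and h(x) ≤ y ≤ g(x)}, and define H : ℝ² → ℝ by H(x,y) = 2L·max{0, x − a, −x} + max{0, y − g(x), h(x) − y}. Then: (i) H is a DC function on ℝ², i.e. the difference of two convex functions on ℝ²; (ii) H ≥ 0 and H⁻¹({0}) = M; (iii) if (x,y) ∉ M and H is differentiable at (x,y), then |∇H(x,y)| ≥ min(1, L). -/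
open Set

private lemma cvx_affine (m c : ℝ) : ConvexOn ℝ univ (fun x : ℝ => m * x + c) := by
  refine ⟨convex_univ, ?_⟩
  intro x _ y _ s t hs ht hst
  simp only [smul_eq_mul]
  have ht1 : t = 1 - s := by linarith
  subst ht1; exact le_of_eq (by ring)

private lemma cvx_comp {φ : ℝ → ℝ} (hφ : ConvexOn ℝ univ φ) (i : Fin 2) :
    ConvexOn ℝ univ (fun p : EuclideanSpace ℝ (Fin 2) => φ (p i)) := by
  refine ⟨convex_univ, ?_⟩
  intro p _ q _ s t hs ht hst
  have := hφ.2 (mem_univ (p i)) (mem_univ (q i)) hs ht hst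
  simpa [PiLp.add_apply, PiLp.smul_apply, smul_eq_mul] using this

private lemma cvx_coord (c : ℝ) (i : Fin 2) :
    ConvexOn ℝ univ (fun p : EuclideanSpace ℝ (Fin 2) => c * p i) := by
  refine ⟨convex_univ, ?_⟩
  intro p _ q _ s t hs ht hst
  simp only [PiLp.add_apply, PiLp.smul_apply, smul_eq_mul]
  have ht1 : t = 1 - s := by linarith
  subst ht1; exact le_of_eq (by ring)

private lemma key_max (G1 G2 H1 H2 Y : ℝ) :
    max 0 (max (Y - (G1 - G2)) (H1 - H2 - Y)) =
      max (G1 + H2 + Y) (max (G2 + H2 + 2*Y) (H1 + G1)) - (G1 + H2 + Y) := by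
  rw [eq_sub_iff_add_eq, ← max_add_add_right, ← max_add_add_right]
  congr 1
  · ring
  · congr 1 <;> ring

private lemma deriv_abs_le {r : ℝ → ℝ} {d L : ℝ} (hr : HasDerivAt r d 0)
    (hlip : ∀ t : ℝ, |r t - r 0| ≤ L * |t|) : |d| ≤ L := by
  rw [hasDerivAt_iff_tendsto_slope] at hr
  refine le_of_tendsto hr.abs ?_
  filter_upwards [self_mem_nhdsWithin] with t ht
  have ht0 : t ≠ 0 := ht
  rw [slope_def_field, sub_zero, abs_div, div_le_iff₀ (abs_pos.2 ht0)]
  exact hlip t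

private lemma hasDerivAt_line {H : EuclideanSpace ℝ (Fin 2) → ℝ} {p : EuclideanSpace ℝ (Fin 2)}
    (hd : DifferentiableAt ℝ H p) (v : EuclideanSpace ℝ (Fin 2)) :
    HasDerivAt (fun t : ℝ => H (p + t • v)) (fderiv ℝ H p v) 0 := by
  have h1 : HasDerivAt (fun t : ℝ => p + t • v) v 0 := by
    simpa using ((hasDerivAt_id (0:ℝ)).smul_const v).const_add p
  have h2 : HasFDerivAt H (fderiv ℝ H p) ((fun t : ℝ => p + t • v) 0) := by
    simpa using hd.hasFDerivAt
  exact h2.comp_hasDerivAt 0 h1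

/-- Let `a, L > 0` and let `g, h : ℝ → ℝ` be DC, `L`-Lipschitz, with
`g ≥ h`.  Let `M = {(x,y) : 0 ≤ x ≤ a, h x ≤ y ≤ g x}` and
`H (x,y) = 2L·max{0, x−a, −x} + max{0, y − g x, h x − y}`.  Then `H` is DC on `ℝ²`,
`H ≥ 0` with `H⁻¹({0}) = M`, and at every point outside `M` where `H` is differentiable the
norm of its gradient is at least `min 1 L`. -/
theorem aura_for_region_between_DC_graphs
    (a L : ℝ) (ha : 0 < a) (hL : 0 < L) (g h : ℝ → ℝ)
    (hgDC : ∃ g₁ g₂ : ℝ → ℝ, ConvexOn ℝ univ g₁ ∧ ConvexOn ℝ univ g₂ ∧ g = g₁ - g₂)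
    (hhDC : ∃ h₁ h₂ : ℝ → ℝ, ConvexOn ℝ univ h₁ ∧ ConvexOn ℝ univ h₂ ∧ h = h₁ - h₂)
    (hgLip : ∀ x y : ℝ, |g x - g y| ≤ L * |x - y|)
    (hhLip : ∀ x y : ℝ, |h x - h y| ≤ L * |x - y|)
    (hgh : ∀ x : ℝ, h x ≤ g x)
    (M : Set (EuclideanSpace ℝ (Fin 2)))
    (hM : M = {p : EuclideanSpace ℝ (Fin 2) |
      0 ≤ p 0 ∧ p 0 ≤ a ∧ h (p 0) ≤ p 1 ∧ p 1 ≤ g (p 0)})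
    (H : EuclideanSpace ℝ (Fin 2) → ℝ)
    (hH : H = fun p => 2 * L * max 0 (max (p 0 - a) (-(p 0)))
      + max 0 (max (p 1 - g (p 0)) (h (p 0) - p 1))) :
    (∃ F G : EuclideanSpace ℝ (Fin 2) → ℝ,
        ConvexOn ℝ univ F ∧ ConvexOn ℝ univ G ∧ H = F - G) ∧
    ((∀ p, 0 ≤ H p) ∧ H ⁻¹' {0} = M) ∧
    (∀ p, p ∉ M → DifferentiableAt ℝ H p → min 1 L ≤ ‖fderiv ℝ H p‖) := by
  obtain ⟨g₁, g₂, hg₁, hg₂, hg⟩ := hgDC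
  obtain ⟨h₁, h₂, hh₁, hh₂, hh⟩ := hhDC
  refine ⟨?_, ⟨?_, ?_⟩, ?_⟩
  · -- part (i)
    refine ⟨fun p => 2 * L * max 0 (max (p 0 - a) (-(p 0)))
        + max (g₁ (p 0) + h₂ (p 0) + p 1)
            (max (g₂ (p 0) + h₂ (p 0) + 2 * p 1) (h₁ (p 0) + g₁ (p 0))),
      fun p => g₁ (p 0) + h₂ (p 0) + p 1, ?_, ?_, ?_⟩
    · apply ConvexOn.add
      · have hφ : ConvexOn ℝ univ (fun x : ℝ => 2 * L * max 0 (max (x - a) (-x))) := by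
          have h0 : ConvexOn ℝ univ (fun x : ℝ => max 0 (max (x - a) (-x))) := by
            have e1 : (fun x : ℝ => x - a) = fun x => 1 * x + (-a) := by funext x; ring
            have e2 : (fun x : ℝ => -x) = fun x => (-1) * x + 0 := by funext x; ring
            exact (convexOn_const 0 convex_univ).sup
              (((e1 ▸ cvx_affine 1 (-a)) : ConvexOn ℝ univ fun x : ℝ => x - a).sup
               ((e2 ▸ cvx_affine (-1) 0) : ConvexOn ℝ univ fun x : ℝ => -x))
          simpa [smul_eq_mul, mul_comm] using h0.smul (by positivity : (0:ℝ) ≤ 2 * L)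
        exact cvx_comp hφ 0
      · refine ConvexOn.sup ?_ (ConvexOn.sup ?_ ?_)
        · exact ((cvx_comp hg₁ 0).add (cvx_comp hh₂ 0)).add
            (by simpa using cvx_coord 1 1)
        · exact ((cvx_comp hg₂ 0).add (cvx_comp hh₂ 0)).add (cvx_coord 2 1)
        · exact (cvx_comp hh₁ 0).add (cvx_comp hg₁ 0)
    · exact ((cvx_comp hg₁ 0).add (cvx_comp hh₂ 0)).add (by simpa using cvx_coord 1 1)
    · funext p
      have hgp : g (p 0) = g₁ (p 0) - g₂ (p 0) := by rw [hg]; rfl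
      have hhp : h (p 0) = h₁ (p 0) - h₂ (p 0) := by rw [hh]; rfl
      simp only [hH, Pi.sub_apply, hgp, hhp]
      rw [key_max (g₁ (p 0)) (g₂ (p 0)) (h₁ (p 0)) (h₂ (p 0)) (p 1)]
      ring
  · -- H ≥ 0
    intro p
    rw [hH]
    have m1 : (0:ℝ) ≤ max 0 (max (p 0 - a) (-(p 0))) := le_max_left _ _
    have m2 : (0:ℝ) ≤ max 0 (max (p 1 - g (p 0)) (h (p 0) - p 1)) := le_max_left _ _
    positivity
  · -- H⁻¹{0} = M
    ext p
    simp only [mem_preimage, mem_singleton_iff, hM, mem_setOf_eq, hH]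
    constructor
    · intro h0
      have m1 : (0:ℝ) ≤ max 0 (max (p 0 - a) (-(p 0))) := le_max_left _ _
      have m2 : (0:ℝ) ≤ max 0 (max (p 1 - g (p 0)) (h (p 0) - p 1)) := le_max_left _ _
      have hm1 : max 0 (max (p 0 - a) (-(p 0))) = 0 := by nlinarith
      have hm2 : max 0 (max (p 1 - g (p 0)) (h (p 0) - p 1)) = 0 := by nlinarith
      have b1 : p 0 - a ≤ 0 := le_of_le_of_eq ((le_max_left _ _).trans (le_max_right _ _)) hm1
      have b2 : -(p 0) ≤ 0 := le_of_le_of_eq ((le_max_right _ _).trans (le_max_right _ _)) hm1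
      have b3 : p 1 - g (p 0) ≤ 0 :=
        le_of_le_of_eq ((le_max_left _ _).trans (le_max_right _ _)) hm2
      have b4 : h (p 0) - p 1 ≤ 0 :=
        le_of_le_of_eq ((le_max_right _ _).trans (le_max_right _ _)) hm2
      exact ⟨by linarith, by linarith, by linarith, by linarith⟩
    · rintro ⟨c1, c2, c3, c4⟩
      have hm1 : max 0 (max (p 0 - a) (-(p 0))) = 0 := by
        rw [max_eq_left]; exact max_le (by linarith) (by linarith)
      have hm2 : max 0 (max (p 1 - g (p 0)) (h (p 0) - p 1)) = 0 := by
        rw [max_eq_left]; exact max_le (by linarith) (by linarith)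
      rw [hm1, hm2]; ring
  · -- gradient bound
    intro p hpM hd
    set f := fderiv ℝ H p with hf
    have hfin : ∀ v : EuclideanSpace ℝ (Fin 2), ‖v‖ = 1 → min 1 L ≤ |f v| → min 1 L ≤ ‖f‖ := by
      intro v hv hle
      calc min 1 L ≤ |f v| := hle
        _ = ‖f v‖ := (Real.norm_eq_abs _).symm
        _ ≤ ‖f‖ * ‖v‖ := f.le_opNorm v
        _ = ‖f‖ := by rw [hv, mul_one]
    set x := p 0 with hx
    set y := p 1 with hy
    have hcases : g x < y ∨ y < h x ∨ x < 0 ∨ a < x := by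
      by_contra hc
      push_neg at hc
      rw [hM] at hpM
      exact hpM ⟨hc.2.2.1, hc.2.2.2, hc.2.1, hc.1⟩
    have e1n : ‖EuclideanSpace.single (1 : Fin 2) (1:ℝ)‖ = 1 := by
      simp [EuclideanSpace.norm_single]
    have e0n : ‖EuclideanSpace.single (0 : Fin 2) (1:ℝ)‖ = 1 := by
      simp [EuclideanSpace.norm_single]
    have c00 : ∀ t : ℝ, (p + t • EuclideanSpace.single (0 : Fin 2) (1:ℝ)) 0 = x + t := by
      intro t
      simp [PiLp.add_apply, PiLp.smul_apply, EuclideanSpace.single_apply]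
      rfl
    have c01 : ∀ t : ℝ, (p + t • EuclideanSpace.single (0 : Fin 2) (1:ℝ)) 1 = y := by
      intro t
      simp [PiLp.add_apply, PiLp.smul_apply, EuclideanSpace.single_apply,
        (by decide : (1 : Fin 2) ≠ 0)]
      rfl
    have c10 : ∀ t : ℝ, (p + t • EuclideanSpace.single (1 : Fin 2) (1:ℝ)) 0 = x := by
      intro t
      simp [PiLp.add_apply, PiLp.smul_apply, EuclideanSpace.single_apply,
        (by decide : (0 : Fin 2) ≠ 1)]
      rfl
    have c11 : ∀ t : ℝ, (p + t • EuclideanSpace.single (1 : Fin 2) (1:ℝ)) 1 = y + t := by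
      intro t
      simp [PiLp.add_apply, PiLp.smul_apply, EuclideanSpace.single_apply]
      rfl
    rcases hcases with h1 | h2 | h3 | h4
    · -- y > g x : vertical derivative is 1
      have key := hasDerivAt_line hd (EuclideanSpace.single (1 : Fin 2) (1:ℝ))
      have hψ : HasDerivAt
          (fun t : ℝ => (2 * L * max 0 (max (x - a) (-x)) + (y - g x)) + t) 1 0 := by
        simpa using (hasDerivAt_id (0:ℝ)).const_add (2 * L * max 0 (max (x - a) (-x)) + (y - g x))
      have heq : (fun t : ℝ => H (p + t • EuclideanSpace.single (1 : Fin 2) (1:ℝ)))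
          =ᶠ[nhds 0] fun t => (2 * L * max 0 (max (x - a) (-x)) + (y - g x)) + t := by
        filter_upwards [Metric.ball_mem_nhds (0:ℝ) (sub_pos.2 h1)] with t ht
        have ht' : |t| < y - g x := by simpa [Real.dist_eq] using ht
        have ht2 := abs_lt.mp ht'
        rw [hH]
        simp only [c10, c11]
        rw [max_eq_left (by linarith [hgh x] : h x - (y + t) ≤ y + t - g x),
          max_eq_right (by linarith : (0:ℝ) ≤ y + t - g x)]
        ring
      have hD : f (EuclideanSpace.single (1 : Fin 2) (1:ℝ)) = 1 :=
        key.unique (hψ.congr_of_eventuallyEq heq)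
      refine hfin _ e1n ?_
      rw [hD]
      simpa using min_le_left (1:ℝ) L
    · -- y < h x : vertical derivative is -1
      have key := hasDerivAt_line hd (EuclideanSpace.single (1 : Fin 2) (1:ℝ))
      have hψ : HasDerivAt
          (fun t : ℝ => (2 * L * max 0 (max (x - a) (-x)) + (h x - y)) - t) (-1) 0 := by
        simpa using (hasDerivAt_id (0:ℝ)).const_sub (2 * L * max 0 (max (x - a) (-x)) + (h x - y))
      have heq : (fun t : ℝ => H (p + t • EuclideanSpace.single (1 : Fin 2) (1:ℝ)))
          =ᶠ[nhds 0] fun t => (2 * L * max 0 (max (x - a) (-x)) + (h x - y)) - t := by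
        filter_upwards [Metric.ball_mem_nhds (0:ℝ) (sub_pos.2 h2)] with t ht
        have ht' : |t| < h x - y := by simpa [Real.dist_eq] using ht
        have ht2 := abs_lt.mp ht'
        rw [hH]
        simp only [c10, c11]
        rw [max_eq_right (by linarith [hgh x] : y + t - g x ≤ h x - (y + t)),
          max_eq_right (by linarith : (0:ℝ) ≤ h x - (y + t))]
        ring
      have hD : f (EuclideanSpace.single (1 : Fin 2) (1:ℝ)) = -1 :=
        key.unique (hψ.congr_of_eventuallyEq heq)
      refine hfin _ e1n ?_
      rw [hD]
      simpa using min_le_left (1:ℝ) L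
    all_goals {
      -- horizontal cases : x < 0 or a < x
      have key := hasDerivAt_line hd (EuclideanSpace.single (0 : Fin 2) (1:ℝ))
      set D := f (EuclideanSpace.single (0 : Fin 2) (1:ℝ)) with hD
      set r : ℝ → ℝ := fun t => max 0 (max (y - g (x + t)) (h (x + t) - y)) with hr
      have hr0 : r 0 = max 0 (max (y - g x) (h x - y)) := by simp [hr]
      have hlip : ∀ t : ℝ, |r t - r 0| ≤ L * |t| := by
        intro t
        have b1 : |(y - g (x + t)) - (y - g x)| ≤ L * |t| := by
          rw [show (y - g (x + t)) - (y - g x) = -(g (x + t) - g x) by ring, abs_neg]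
          simpa using hgLip (x + t) x
        have b2 : |(h (x + t) - y) - (h x - y)| ≤ L * |t| := by
          rw [show (h (x + t) - y) - (h x - y) = h (x + t) - h x by ring]
          simpa using hhLip (x + t) x
        calc |r t - r 0|
            ≤ max |(0:ℝ) - 0|
              |max (y - g (x + t)) (h (x + t) - y) - max (y - g x) (h x - y)| := by
                rw [hr0]; exact abs_max_sub_max_le_max _ _ _ _
          _ ≤ max |(0:ℝ) - 0| (max |(y - g (x + t)) - (y - g x)| |(h (x + t) - y) - (h x - y)|) :=
              max_le_max le_rfl (abs_max_sub_max_le_max _ _ _ _)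
          _ ≤ L * |t| := by
              refine max_le (by simp; positivity) (max_le b1 b2)
      first
      | ( -- x < 0
        have heq : (fun t : ℝ => H (p + t • EuclideanSpace.single (0 : Fin 2) (1:ℝ)))
            =ᶠ[nhds 0] fun t => 2 * L * (-(x + t)) + r t := by
          filter_upwards [Metric.ball_mem_nhds (0:ℝ) (by linarith : (0:ℝ) < -x)] with t ht
          have ht' : |t| < -x := by simpa [Real.dist_eq] using ht
          have ht2 := abs_lt.mp ht'
          rw [hH]
          simp only [c00, c01, hr]
          rw [max_eq_right (by linarith : x + t - a ≤ -(x + t)),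
            max_eq_right (by linarith : (0:ℝ) ≤ -(x + t))]
        have hlin : HasDerivAt (fun t : ℝ => 2 * L * (x + t)) (2 * L) 0 := by
          simpa using ((hasDerivAt_id (0:ℝ)).const_add x).const_mul (2 * L)
        have hrd : HasDerivAt r (D + 2 * L) 0 := by
          refine HasDerivAt.congr_of_eventuallyEq (key.add hlin) ?_
          filter_upwards [heq] with t ht
          have : H (p + t • EuclideanSpace.single (0 : Fin 2) (1:ℝ))
              = 2 * L * (-(x + t)) + r t := ht
          rw [hr]
          simp only [hr, Pi.add_apply] at this ⊢
          linarith [this]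
        have hbd : |D + 2 * L| ≤ L := deriv_abs_le hrd hlip
        have t1 := abs_sub_abs_le_abs_sub (2 * L) (D + 2 * L)
        have t2 : |2 * L - (D + 2 * L)| = |D| := by
          rw [show 2 * L - (D + 2 * L) = -D by ring, abs_neg]
        have t3 : |2 * L| = 2 * L := abs_of_pos (by positivity)
        refine hfin _ e0n (le_trans (min_le_right 1 L) ?_)
        rw [← hD]
        linarith )
      | ( -- a < x
        have heq : (fun t : ℝ => H (p + t • EuclideanSpace.single (0 : Fin 2) (1:ℝ)))
            =ᶠ[nhds 0] fun t => 2 * L * (x + t - a) + r t := by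
          filter_upwards [Metric.ball_mem_nhds (0:ℝ) (by linarith : (0:ℝ) < x - a)] with t ht
          have ht' : |t| < x - a := by simpa [Real.dist_eq] using ht
          have ht2 := abs_lt.mp ht'
          rw [hH]
          simp only [c00, c01, hr]
          rw [max_eq_left (by linarith : -(x + t) ≤ x + t - a),
            max_eq_right (by linarith : (0:ℝ) ≤ x + t - a)]
        have hlin : HasDerivAt (fun t : ℝ => 2 * L * (x + t - a)) (2 * L) 0 := by
          simpa using (((hasDerivAt_id (0:ℝ)).const_add x).sub_const a).const_mul (2 * L)
        have hrd : HasDerivAt r (D - 2 * L) 0 := by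
          refine HasDerivAt.congr_of_eventuallyEq (key.sub hlin) ?_
          filter_upwards [heq] with t ht
          have : H (p + t • EuclideanSpace.single (0 : Fin 2) (1:ℝ))
              = 2 * L * (x + t - a) + r t := ht
          rw [hr]
          simp only [hr, Pi.sub_apply] at this ⊢
          linarith [this]
        have hbd : |D - 2 * L| ≤ L := deriv_abs_le hrd hlip
        refine hfin _ e0n (le_trans (min_le_right 1 L) ?_)
        rw [← hD]
        have := abs_le.mp hbd
        have hDge : L ≤ D := by linarith
        calc L ≤ D := hDge
          _ ≤ |D| := le_abs_self D )
    }
end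

section
/- Let f : [a,b] → ℝ be of class C² (the restriction of a C² function on an open interval containing [a,b]), and set Λ = ∫_a^b |f''(s)| ds. Define g(x) = ∫_a^x ∫_a^t (f''(s))₊ ds dt, h(x) = ∫_a^x ∫_a^t (f''(s))₋ ds dt, and φ(x) = f'(a)·(x − a) + f(a) for x ∈ [a,b], where (·)₊ and (·)₋ denote the positive and negative parts. Then g and h are convex, Λ-Lipschitz functions on [a,b] with g(a) = h(a) = 0, φ is affine, and f = g − h + φ on [a,b]. -/
open Set intervalIntegral MeasureTheory

private lemma aux_hasDeriv {J : Set ℝ} (hJ : IsOpen J) (hJo : J.OrdConnected)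
    {a : ℝ} (ha : a ∈ J) {F : ℝ → ℝ} (hF : ContinuousOn F J) :
    ∀ x ∈ J, HasDerivAt (fun t => ∫ s in a..t, F s) (F x) x := fun x hx =>
  intervalIntegral.integral_hasDerivAt_right
    ((hF.mono (hJo.uIcc_subset ha hx)).intervalIntegrable)
    (hF.stronglyMeasurableAtFilter hJ x hx)
    (hF.continuousAt (hJ.mem_nhds hx))

private lemma aux_main {a b ε : ℝ} (hab : a ≤ b) (hε : 0 < ε) {F : ℝ → ℝ}
    (hF : ContinuousOn F (Ioo (a - ε) (b + ε))) (hF0 : ∀ s, 0 ≤ F s)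
    {Λ : ℝ} (hbound : ∀ t ∈ Icc a b, (∫ s in a..t, F s) ≤ Λ) :
    ConvexOn ℝ (Icc a b) (fun x => ∫ t in a..x, ∫ s in a..t, F s) ∧
    ∀ x ∈ Icc a b, ∀ y ∈ Icc a b,
      |(∫ t in a..x, ∫ s in a..t, F s) - (∫ t in a..y, ∫ s in a..t, F s)| ≤ Λ * |x - y| := by
  set J := Ioo (a - ε) (b + ε) with hJdef
  have hJ : IsOpen J := isOpen_Ioo
  have hJo : J.OrdConnected := ordConnected_Ioo
  have hsub : Icc a b ⊆ J := Icc_subset_Ioo (by linarith) (by linarith)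
  have ha : a ∈ J := hsub (left_mem_Icc.mpr hab)
  set G := fun t => ∫ s in a..t, F s with hGdef
  have hGd : ∀ x ∈ J, HasDerivAt G (F x) x := aux_hasDeriv hJ hJo ha hF
  have hGc : ContinuousOn G J := fun x hx => (hGd x hx).continuousAt.continuousWithinAt
  have hGd2 : ∀ x ∈ J, HasDerivAt (fun x => ∫ t in a..x, G t) (G x) x :=
    aux_hasDeriv hJ hJo ha hGc
  have hGmono : MonotoneOn G J := by
    intro x hx y hy hxy
    have h1 : IntervalIntegrable F volume a y :=
      (hF.mono (hJo.uIcc_subset ha hy)).intervalIntegrable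
    have h2 : IntervalIntegrable F volume a x :=
      (hF.mono (hJo.uIcc_subset ha hx)).intervalIntegrable
    have hsubeq : G y - G x = ∫ s in x..y, F s := integral_interval_sub_left h1 h2
    have h0 : (0:ℝ) ≤ ∫ s in x..y, F s :=
      intervalIntegral.integral_nonneg hxy (fun u _ => hF0 u)
    linarith
  have hGnn : ∀ t, a ≤ t → 0 ≤ G t := fun t ht =>
    intervalIntegral.integral_nonneg ht (fun u _ => hF0 u)
  constructor
  · refine MonotoneOn.convexOn_of_deriv (convex_Icc a b)
      (fun x hx => ((hGd2 x (hsub hx)).continuousAt.continuousWithinAt)) ?_ ?_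
    · intro x hx
      rw [interior_Icc] at hx
      exact ((hGd2 x (hsub (Ioo_subset_Icc_self hx))).differentiableAt.differentiableWithinAt)
    · intro x hx y hy hxy
      rw [interior_Icc] at hx hy
      rw [(hGd2 x (hsub (Ioo_subset_Icc_self hx))).deriv,
          (hGd2 y (hsub (Ioo_subset_Icc_self hy))).deriv]
      exact hGmono (hsub (Ioo_subset_Icc_self hx)) (hsub (Ioo_subset_Icc_self hy)) hxy
  · intro x hx y hy
    have h1 : IntervalIntegrable G volume a x :=
      (hGc.mono (hJo.uIcc_subset ha (hsub hx))).intervalIntegrable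
    have h2 : IntervalIntegrable G volume a y :=
      (hGc.mono (hJo.uIcc_subset ha (hsub hy))).intervalIntegrable
    have hsubeq : (∫ t in a..x, G t) - (∫ t in a..y, G t) = ∫ t in y..x, G t :=
      integral_interval_sub_left h1 h2
    rw [hsubeq]
    have := intervalIntegral.norm_integral_le_of_norm_le_const (C := Λ) (a := y) (b := x)
      (f := G) ?_
    · simpa [Real.norm_eq_abs] using this
    · intro t ht
      have ht' : t ∈ Icc a b :=
        (ordConnected_Icc.uIcc_subset hy hx) (uIoc_subset_uIcc ht)
      rw [Real.norm_eq_abs, abs_of_nonneg (hGnn t ht'.1)]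
      exact hbound t ht'

/-- For a `C²` function `f` on `[a,b]` with `Λ = ∫_a^b |f''|`, the functions
`g x = ∫_a^x ∫_a^t (f''(s))₊ ds dt`, `h x = ∫_a^x ∫_a^t (f''(s))₋ ds dt` and
`φ x = f'(a)(x−a) + f(a)` satisfy: `g, h` are convex and `Λ`-Lipschitz on `[a,b]` with
`g a = h a = 0`, `φ` is affine, and `f = g − h + φ` on `[a,b]`. -/
theorem decomposition_of_C2_function
    (a b : ℝ) (hab : a ≤ b) (f : ℝ → ℝ)
    (hf : ∃ O : Set ℝ, IsOpen O ∧ Icc a b ⊆ O ∧ ContDiffOn ℝ 2 f O)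
    (Λ : ℝ) (hΛ : Λ = ∫ s in a..b, |deriv (deriv f) s|)
    (g h φ : ℝ → ℝ)
    (hg : g = fun x => ∫ t in a..x, ∫ s in a..t, max (deriv (deriv f) s) 0)
    (hh : h = fun x => ∫ t in a..x, ∫ s in a..t, max (-(deriv (deriv f) s)) 0)
    (hφ : φ = fun x => deriv f a * (x - a) + f a) :
    ConvexOn ℝ (Icc a b) g ∧ ConvexOn ℝ (Icc a b) h ∧
    (∀ x ∈ Icc a b, ∀ y ∈ Icc a b, |g x - g y| ≤ Λ * |x - y|) ∧
    (∀ x ∈ Icc a b, ∀ y ∈ Icc a b, |h x - h y| ≤ Λ * |x - y|) ∧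
    g a = 0 ∧ h a = 0 ∧
    (∃ c e : ℝ, ∀ x : ℝ, φ x = c * x + e) ∧
    (∀ x ∈ Icc a b, f x = g x - h x + φ x) := by
  obtain ⟨O, hO, hOsub, hf2⟩ := hf
  obtain ⟨δ, hδ, hthick⟩ :=
    (isCompact_Icc : IsCompact (Icc a b)).exists_thickening_subset_open hO hOsub
  set J := Ioo (a - δ) (b + δ) with hJdef
  have hJO : J ⊆ O := by
    intro x hx
    apply hthick
    rw [Metric.mem_thickening_iff]
    rcases le_total x a with h1 | h1
    · refine ⟨a, left_mem_Icc.mpr hab, ?_⟩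
      rw [Real.dist_eq, abs_of_nonpos (by linarith)]
      have := hx.1; linarith
    rcases le_total x b with h2 | h2
    · exact ⟨x, ⟨h1, h2⟩, by simpa using hδ⟩
    · refine ⟨b, right_mem_Icc.mpr hab, ?_⟩
      rw [Real.dist_eq, abs_of_nonneg (by linarith)]
      have := hx.2; linarith
  have hJ : IsOpen J := isOpen_Ioo
  have hJo : J.OrdConnected := ordConnected_Ioo
  have hsub : Icc a b ⊆ J := Icc_subset_Ioo (by linarith) (by linarith)
  have ha : a ∈ J := hsub (left_mem_Icc.mpr hab)
  set c := deriv (deriv f) with hcdef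
  have hd1 : ContDiffOn ℝ 1 (deriv f) O := hf2.deriv_of_isOpen hO (by norm_num)
  have hcO : ContinuousOn c O := hd1.continuousOn_deriv_of_isOpen hO le_rfl
  have hcJ : ContinuousOn c J := hcO.mono hJO
  have hcabs : ContinuousOn (fun s => |c s|) J := hcJ.abs
  have hFp : ContinuousOn (fun s => max (c s) 0) J := hcJ.sup continuousOn_const
  have hFm : ContinuousOn (fun s => max (-c s) 0) J := hcJ.neg.sup continuousOn_const
  -- bounds
  have habs_int : ∀ x ∈ J, ∀ y ∈ J, IntervalIntegrable (fun s => |c s|) volume x y :=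
    fun x hx y hy => (hcabs.mono (hJo.uIcc_subset hx hy)).intervalIntegrable
  have hbound : ∀ (F : ℝ → ℝ), ContinuousOn F J → (∀ s, F s ≤ |c s|) →
      ∀ t ∈ Icc a b, (∫ s in a..t, F s) ≤ Λ := by
    intro F hFc hFle t ht
    rw [hΛ]
    have h1 : (∫ s in a..t, F s) ≤ ∫ s in a..t, |c s| :=
      intervalIntegral.integral_mono_on ht.1
        ((hFc.mono (hJo.uIcc_subset ha (hsub ht))).intervalIntegrable)
        (habs_int a ha t (hsub ht)) (fun s _ => hFle s)
    have h2 : (∫ s in a..t, |c s|) ≤ ∫ s in a..b, |c s| :=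
      intervalIntegral.integral_mono_interval le_rfl ht.1 ht.2
        (ae_of_all _ fun s => abs_nonneg _)
        (habs_int a ha b (hsub (right_mem_Icc.mpr hab)))
    linarith
  have hp := aux_main hab hδ hFp (fun s => le_max_right _ _)
    (hbound _ hFp (fun s => max_le (le_abs_self _) (abs_nonneg _)))
  have hm := aux_main hab hδ hFm (fun s => le_max_right _ _)
    (hbound _ hFm (fun s => max_le (neg_le_abs _) (abs_nonneg _)))
  have hgp : g = fun x => ∫ t in a..x, ∫ s in a..t, max (c s) 0 := hg
  have hhm : h = fun x => ∫ t in a..x, ∫ s in a..t, max (-c s) 0 := by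
    rw [hh]
  refine ⟨by rw [hgp]; exact hp.1, by rw [hhm]; exact hm.1,
    by rw [hgp]; exact hp.2, by rw [hhm]; exact hm.2,
    by rw [hg]; simp, by rw [hh]; simp,
    ⟨deriv f a, f a - deriv f a * a, fun x => by rw [hφ]; ring⟩, ?_⟩
  -- the decomposition
  intro x hx
  have hxJ : x ∈ J := hsub hx
  have hf'd : ∀ t ∈ J, HasDerivAt f (deriv f t) t := fun t ht =>
    ((hf2.differentiableOn (by norm_num)).differentiableAt (hO.mem_nhds (hJO ht))).hasDerivAt
  have hf''d : ∀ t ∈ J, HasDerivAt (deriv f) (c t) t := fun t ht =>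
    ((hd1.differentiableOn (by norm_num)).differentiableAt (hO.mem_nhds (hJO ht))).hasDerivAt
  set Gp := fun t => ∫ s in a..t, max (c s) 0 with hGp
  set Gm := fun t => ∫ s in a..t, max (-c s) 0 with hGm
  have hGpc : ContinuousOn Gp J := fun u hu =>
    (aux_hasDeriv hJ hJo ha hFp u hu).continuousAt.continuousWithinAt
  have hGmc : ContinuousOn Gm J := fun u hu =>
    (aux_hasDeriv hJ hJo ha hFm u hu).continuousAt.continuousWithinAt
  have hGdiff : ∀ t ∈ J, Gp t - Gm t = deriv f t - deriv f a := by
    intro t ht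
    have hip : IntervalIntegrable (fun s => max (c s) 0) volume a t :=
      (hFp.mono (hJo.uIcc_subset ha ht)).intervalIntegrable
    have him : IntervalIntegrable (fun s => max (-c s) 0) volume a t :=
      (hFm.mono (hJo.uIcc_subset ha ht)).intervalIntegrable
    have : Gp t - Gm t = ∫ s in a..t, (max (c s) 0 - max (-c s) 0) :=
      (intervalIntegral.integral_sub hip him).symm
    rw [this]
    have heq : ∀ s, max (c s) 0 - max (-c s) 0 = c s := fun s =>
      max_zero_sub_max_neg_zero_eq_self _
    simp_rw [heq]
    exact intervalIntegral.integral_eq_sub_of_hasDerivAt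
      (fun s hs => hf''d s (hJo.uIcc_subset ha ht hs))
      ((hcJ.mono (hJo.uIcc_subset ha ht)).intervalIntegrable)
  have hGpint : IntervalIntegrable Gp volume a x :=
    (hGpc.mono (hJo.uIcc_subset ha hxJ)).intervalIntegrable
  have hGmint : IntervalIntegrable Gm volume a x :=
    (hGmc.mono (hJo.uIcc_subset ha hxJ)).intervalIntegrable
  have key : g x - h x = ∫ t in a..x, (deriv f t - deriv f a) := by
    rw [hg, hh]
    have : (∫ t in a..x, Gp t) - ∫ t in a..x, Gm t = ∫ t in a..x, (Gp t - Gm t) :=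
      (intervalIntegral.integral_sub hGpint hGmint).symm
    show (∫ t in a..x, Gp t) - (∫ t in a..x, Gm t) = _
    rw [this]
    exact intervalIntegral.integral_congr fun t ht =>
      hGdiff t (hJo.uIcc_subset ha hxJ ht)
  have hder_int : IntervalIntegrable (deriv f) volume a x :=
    (((hd1.continuousOn).mono hJO).mono (hJo.uIcc_subset ha hxJ)).intervalIntegrable
  have key2 : (∫ t in a..x, (deriv f t - deriv f a)) = (f x - f a) - (x - a) * deriv f a := by
    rw [intervalIntegral.integral_sub hder_int intervalIntegrable_const]
    rw [intervalIntegral.integral_eq_sub_of_hasDerivAt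
      (fun t ht => hf'd t (hJo.uIcc_subset ha hxJ ht)) hder_int]
    rw [intervalIntegral.integral_const, smul_eq_mul]
  rw [hφ]
  show f x = g x - h x + (deriv f a * (x - a) + f a)
  have := key.trans key2
  linarith [this]
end
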